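/- arXiv:1408.5682 — 3 statements merged into one kernel-verified Lean document; each statement's English description precedes it below -/
import Mathlib

section
/- The function d defined on pairs of Borel probability measures on ℝ by d(μ₁, μ₂) = sup{ |G_{μ₁}(z) − G_{μ₂}(z)| : z ∈ ℂ, Im(z) ≥ 1 } is a metric on the set of Borel probability measures on ℝ; in particular d(μ₁, μ₂) = 0 implies μ₁ = μ₂, d is symmetric, and d satisfies the triangle inequality. -/
open MeasureTheory Filter
open scoped ENNReal Topology

noncomputable section

/-- The distance `k`-graph of a graph: same vertices, edges between vertices at distance `k`. -/
def distGraph {W : Type*} (H : SimpleGraph W) (k : ℕ) : SimpleGraph W where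
  Adj x y := x ≠ y ∧ H.dist x y = k
  symm := ⟨fun x y h => ⟨h.1.symm, by rw [SimpleGraph.dist_comm]; exact h.2⟩⟩
  loopless := ⟨fun x h => h.1 rfl⟩

/-- Vertex set of the `N`-fold star power of a graph rooted at `e`:
the common root `none`, plus `N` copies of the non-root vertices. -/
abbrev StarVert (V : Type*) (e : V) (N : ℕ) := Option (Fin N × {v : V // v ≠ e})

def starAdj {V : Type*} (G : SimpleGraph V) (e : V) (N : ℕ) :
    StarVert V e N → StarVert V e N → Prop
  | none, none => False
  | none, some q => G.Adj e q.2.1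
  | some p, none => G.Adj p.2.1 e
  | some p, some q => p.1 = q.1 ∧ G.Adj p.2.1 q.2.1

/-- The `N`-fold star power of a rooted graph `(G, e)`: `N` copies of `G` glued at `e`. -/
def starPower {V : Type*} (G : SimpleGraph V) (e : V) (N : ℕ) :
    SimpleGraph (StarVert V e N) where
  Adj := starAdj G e N
  symm := by
    constructor
    rintro (_ | p) (_ | q) h
    · exact h.elim
    · exact h.symm
    · exact h.symm
    · exact ⟨h.1.symm, h.2.symm⟩
  loopless := by
    constructor
    rintro (_ | p) h
    · exact h.elim
    · exact G.loopless.irrefl _ h.2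

/-- The vertex of the `i`-th copy of `G` in the `N`-fold star power corresponding to `v ∈ G`. -/
def rootedEmbed {V : Type*} [DecidableEq V] (e : V) (N : ℕ) (i : Fin N) (v : V) :
    StarVert V e N :=
  if h : v = e then none else some (i, ⟨v, h⟩)

open scoped Classical in
/-- The real adjacency matrix of a graph. -/
def adjMat {W : Type*} [Fintype W] (H : SimpleGraph W) : Matrix W W ℝ :=
  fun x y => if H.Adj x y then 1 else 0

/-- The centered Bernoulli distribution `(1/2)δ_{-1} + (1/2)δ_1`. -/
def bern : Measure ℝ := (1/2 : ℝ≥0∞) • Measure.dirac (-1) + (1/2 : ℝ≥0∞) • Measure.dirac 1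

/-- The Cauchy transform of a measure on `ℝ`. -/
def cauchyT (μ : Measure ℝ) (z : ℂ) : ℂ := ∫ x, (z - (x : ℂ))⁻¹ ∂μ

/-- The distance `d(μ₁,μ₂) = sup_{Im z ≥ 1} |G_{μ₁}(z) - G_{μ₂}(z)|`. -/
def cdist (μ₁ μ₂ : Measure ℝ) : ℝ :=
  ⨆ z : {z : ℂ // 1 ≤ z.im}, ‖cauchyT μ₁ z - cauchyT μ₂ z‖



open scoped BoundedContinuousFunction

lemma ker_ne {z : ℂ} (hz : 0 < z.im) (t : ℝ) : z - (t : ℂ) ≠ 0 := by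
  intro h
  have : (z - (t : ℂ)).im = 0 := by rw [h]; simp
  simp [Complex.sub_im] at this
  linarith

lemma ker_continuous {z : ℂ} (hz : 0 < z.im) :
    Continuous (fun t : ℝ => (z - (t : ℂ))⁻¹) :=
  (continuous_const.sub Complex.continuous_ofReal).inv₀ (ker_ne hz)

lemma ker_abs_le {z : ℂ} (hz : 0 < z.im) (t : ℝ) :
    ‖(z - (t : ℂ))⁻¹‖ ≤ (z.im)⁻¹ := by
  rw [norm_inv]
  have h1 : z.im ≤ ‖z - (t : ℂ)‖ := by
    have := Complex.abs_im_le_norm (z - (t : ℂ))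
    simp only [Complex.sub_im, Complex.ofReal_im, sub_zero] at this
    calc z.im ≤ |z.im| := le_abs_self _
    _ ≤ _ := this
  exact inv_anti₀ hz h1

lemma ker_integrable (μ : Measure ℝ) [IsProbabilityMeasure μ] {z : ℂ} (hz : 0 < z.im) :
    Integrable (fun t : ℝ => (z - (t : ℂ))⁻¹) μ := by
  refine (integrable_const ((z.im)⁻¹ : ℝ)).mono' (ker_continuous hz).aestronglyMeasurable ?_
  exact Eventually.of_forall (ker_abs_le hz)

lemma cauchyT_abs_le (μ : Measure ℝ) [IsProbabilityMeasure μ] {z : ℂ} (hz : 1 ≤ z.im) :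
    ‖cauchyT μ z‖ ≤ 1 := by
  have hz0 : 0 < z.im := lt_of_lt_of_le one_pos hz
  calc ‖cauchyT μ z‖ ≤ ∫ t, ‖(z - (t : ℂ))⁻¹‖ ∂μ :=
        norm_integral_le_integral_norm _
    _ ≤ ∫ (_ : ℝ), (1 : ℝ) ∂μ := by
        refine integral_mono_of_nonneg (Eventually.of_forall fun t => norm_nonneg _)
          (integrable_const 1) (Eventually.of_forall fun t => ?_)
        calc ‖(z - (t : ℂ))⁻¹‖ ≤ (z.im)⁻¹ := ker_abs_le hz0 t
        _ ≤ 1 := by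
            rw [inv_le_one_iff₀]; right; exact hz
    _ = 1 := by simp

lemma cdist_bddAbove (μ₁ μ₂ : Measure ℝ) [IsProbabilityMeasure μ₁] [IsProbabilityMeasure μ₂] :
    BddAbove (Set.range fun z : {z : ℂ // 1 ≤ z.im} =>
      ‖cauchyT μ₁ z - cauchyT μ₂ z‖) := by
  refine ⟨2, ?_⟩
  rintro _ ⟨z, rfl⟩
  calc ‖cauchyT μ₁ z - cauchyT μ₂ z‖
      ≤ ‖cauchyT μ₁ z‖ + ‖cauchyT μ₂ z‖ := by
        exact norm_sub_le _ _
    _ ≤ 1 + 1 := add_le_add (cauchyT_abs_le μ₁ z.2) (cauchyT_abs_le μ₂ z.2)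
    _ = 2 := by norm_num

instance : Nonempty {z : ℂ // 1 ≤ z.im} := ⟨⟨Complex.I, by simp⟩⟩

lemma cdist_nonneg (μ₁ μ₂ : Measure ℝ) : 0 ≤ cdist μ₁ μ₂ :=
  Real.iSup_nonneg fun z => norm_nonneg _

lemma cdist_self (μ : Measure ℝ) : cdist μ μ = 0 := by
  simp only [cdist, sub_self, norm_zero]
  exact ciSup_const

lemma cdist_symm (μ₁ μ₂ : Measure ℝ) : cdist μ₁ μ₂ = cdist μ₂ μ₁ := by
  unfold cdist
  congr 1
  ext z
  exact norm_sub_rev _ _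

lemma cdist_triangle (μ₁ μ₂ μ₃ : Measure ℝ) [IsProbabilityMeasure μ₁]
    [IsProbabilityMeasure μ₂] [IsProbabilityMeasure μ₃] :
    cdist μ₁ μ₃ ≤ cdist μ₁ μ₂ + cdist μ₂ μ₃ := by
  refine ciSup_le fun z => ?_
  calc ‖cauchyT μ₁ z - cauchyT μ₃ z‖
      ≤ ‖cauchyT μ₁ z - cauchyT μ₂ z‖
        + ‖cauchyT μ₂ z - cauchyT μ₃ z‖ := norm_sub_le_norm_sub_add_norm_sub _ _ _
    _ ≤ cdist μ₁ μ₂ + cdist μ₂ μ₃ :=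
        add_le_add (le_ciSup (cdist_bddAbove μ₁ μ₂) z) (le_ciSup (cdist_bddAbove μ₂ μ₃) z)

lemma cauchyT_eq_of_cdist_eq_zero {μ₁ μ₂ : Measure ℝ} [IsProbabilityMeasure μ₁]
    [IsProbabilityMeasure μ₂] (h : cdist μ₁ μ₂ = 0) {z : ℂ} (hz : 1 ≤ z.im) :
    cauchyT μ₁ z = cauchyT μ₂ z := by
  have h1 : ‖cauchyT μ₁ z - cauchyT μ₂ z‖ ≤ 0 := by
    have := le_ciSup (cdist_bddAbove μ₁ μ₂) (⟨z, hz⟩ : {z : ℂ // 1 ≤ z.im})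
    rw [show (⨆ w : {w : ℂ // 1 ≤ w.im},
      ‖cauchyT μ₁ w - cauchyT μ₂ w‖) = 0 from h] at this
    exact this
  have := le_antisymm h1 (norm_nonneg _)
  rwa [norm_eq_zero, sub_eq_zero] at this

lemma cauchyT_hasDerivAt (μ : Measure ℝ) [IsProbabilityMeasure μ] {z₀ : ℂ}
    (h : 0 < z₀.im) :
    HasDerivAt (cauchyT μ) (∫ t : ℝ, -1 / (z₀ - (t : ℂ)) ^ 2 ∂μ) z₀ := by
  set ε := z₀.im / 2 with hε
  have hε0 : 0 < ε := by positivity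
  have him : ∀ z ∈ Metric.ball z₀ ε, ε < z.im := by
    intro z hz
    have h1 : |z.im - z₀.im| ≤ ‖z - z₀‖ := by
      have := Complex.abs_im_le_norm (z - z₀)
      simpa [Complex.sub_im] using this
    have h2 : ‖z - z₀‖ < ε := by
      rwa [Metric.mem_ball, Complex.dist_eq] at hz
    have h3 : z₀.im - z.im ≤ |z.im - z₀.im| := by
      rw [abs_sub_comm]; exact le_abs_self _
    have : z₀.im - z.im < ε := lt_of_le_of_lt (h3.trans h1) h2
    linarith [hε.symm ▸ this]
  have key := hasDerivAt_integral_of_dominated_loc_of_deriv_le (μ := μ)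
    (F := fun z t => (z - (t : ℂ))⁻¹) (F' := fun z t => -1 / (z - (t : ℂ)) ^ 2)
    (x₀ := z₀) (bound := fun _ => (ε ^ 2)⁻¹) (Metric.ball_mem_nhds z₀ hε0)
    ?_ ?_ ?_ ?_ ?_ ?_
  · exact key.2
  · filter_upwards [(isOpen_lt continuous_const Complex.continuous_im).eventually_mem (by simpa using h)]
      with z hz
    exact (ker_continuous (by simpa using hz)).aestronglyMeasurable
  · exact ker_integrable μ h
  · exact ((continuous_const.div ((continuous_const.sub Complex.continuous_ofReal).pow 2)
      (fun t => pow_ne_zero 2 (ker_ne h t))).aestronglyMeasurable)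
  · refine Eventually.of_forall fun t => fun z hz => ?_
    have hzim : 0 < z.im := lt_trans hε0 (him z hz)
    have h1 : ε ≤ ‖z - (t : ℂ)‖ := by
      have := Complex.abs_im_le_norm (z - (t : ℂ))
      simp only [Complex.sub_im, Complex.ofReal_im, sub_zero] at this
      exact le_trans (le_of_lt (him z hz)) (le_trans (le_abs_self _) this)
    rw [norm_div, norm_neg, norm_one, norm_pow]
    rw [one_div]
    exact inv_anti₀ (by positivity) (by gcongr)
  · exact (integrable_const _)
  · refine Eventually.of_forall fun t => fun z hz => ?_
    have hzim : 0 < z.im := lt_trans hε0 (him z hz)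
    have := ((hasDerivAt_id z).sub_const (t : ℂ)).inv (ker_ne hzim t)
    simpa using (show HasDerivAt (fun x : ℂ => (x - (t : ℂ))⁻¹) _ z from this)

lemma cauchyT_eqOn_upper {μ₁ μ₂ : Measure ℝ} [IsProbabilityMeasure μ₁] [IsProbabilityMeasure μ₂]
    (h : ∀ z : ℂ, 1 ≤ z.im → cauchyT μ₁ z = cauchyT μ₂ z) :
    ∀ z : ℂ, 0 < z.im → cauchyT μ₁ z = cauchyT μ₂ z := by
  have hU : IsOpen {z : ℂ | 0 < z.im} := isOpen_lt continuous_const Complex.continuous_im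
  have ha : ∀ (μ : Measure ℝ) [IsProbabilityMeasure μ],
      AnalyticOnNhd ℂ (cauchyT μ) {z : ℂ | 0 < z.im} := by
    intro μ _
    refine DifferentiableOn.analyticOnNhd (fun z hz => ?_) hU
    exact ((cauchyT_hasDerivAt μ hz).differentiableAt).differentiableWithinAt
  have hpre : IsPreconnected {z : ℂ | 0 < z.im} := (convex_halfSpace_im_gt 0).isPreconnected
  have h2i : (2 : ℂ) * Complex.I ∈ {z : ℂ | 0 < z.im} := by simp
  have hev : cauchyT μ₁ =ᶠ[𝓝 ((2 : ℂ) * Complex.I)] cauchyT μ₂ := by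
    filter_upwards [(isOpen_lt continuous_const Complex.continuous_im).eventually_mem
      (show (1 : ℝ) < ((2 : ℂ) * Complex.I).im by norm_num)] with z hz
    exact h z (le_of_lt hz)
  exact fun z hz => (ha μ₁).eqOn_of_preconnected_of_eventuallyEq (ha μ₂) hpre h2i hev hz

lemma pois_eq_neg_im (μ : Measure ℝ) [IsProbabilityMeasure μ] (x : ℝ) {y : ℝ} (hy : 0 < y) :
    ∫ t : ℝ, y / ((x - t) ^ 2 + y ^ 2) ∂μ = -(cauchyT μ ((x : ℂ) + y * Complex.I)).im := by
  set z := (x : ℂ) + y * Complex.I with hzdef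
  have hzim : z.im = y := by simp [hzdef]
  have hz : 0 < z.im := by rw [hzim]; exact hy
  have hint := ker_integrable μ hz
  have h1 : (cauchyT μ z).im = ∫ t : ℝ, ((z - (t : ℂ))⁻¹).im ∂μ := by
    have := (Complex.imCLM.integral_comp_comm hint).symm
    simpa [cauchyT] using this
  have h2 : ∀ t : ℝ, ((z - (t : ℂ))⁻¹).im = -(y / ((x - t) ^ 2 + y ^ 2)) := by
    intro t
    rw [Complex.inv_im]
    have hre : (z - (t : ℂ)).re = x - t := by simp [hzdef]
    have him : (z - (t : ℂ)).im = y := by simp [hzdef]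
    rw [Complex.normSq_apply, hre, him]
    ring
  rw [h1]
  simp_rw [h2]
  rw [integral_neg, neg_neg]

lemma pois_eq {μ₁ μ₂ : Measure ℝ} [IsProbabilityMeasure μ₁] [IsProbabilityMeasure μ₂]
    (h : ∀ z : ℂ, 0 < z.im → cauchyT μ₁ z = cauchyT μ₂ z) (x : ℝ) {y : ℝ} (hy : 0 < y) :
    ∫ t : ℝ, y / ((x - t) ^ 2 + y ^ 2) ∂μ₁ = ∫ t : ℝ, y / ((x - t) ^ 2 + y ^ 2) ∂μ₂ := by
  rw [pois_eq_neg_im μ₁ x hy, pois_eq_neg_im μ₂ x hy,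
    h ((x : ℂ) + y * Complex.I) (by simp [hy])]

lemma poisK_integrable {y : ℝ} (hy : 0 < y) (t : ℝ) :
    Integrable (fun x : ℝ => y / ((x - t) ^ 2 + y ^ 2)) := by
  have h1 : Integrable (fun s : ℝ => (1 + (s / y) ^ 2)⁻¹) :=
    integrable_inv_one_add_sq.comp_div hy.ne'
  have h2 : Integrable (fun x : ℝ => (1 + ((x - t) / y) ^ 2)⁻¹) := h1.comp_sub_right t
  have h3 := h2.const_mul y⁻¹
  refine h3.congr (Eventually.of_forall fun x => ?_)
  have hy' : y ≠ 0 := hy.ne'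
  have hpos : (x - t) ^ 2 + y ^ 2 ≠ 0 := by positivity
  field_simp
  ring

lemma poisK_integral {y : ℝ} (hy : 0 < y) (t : ℝ) :
    ∫ x : ℝ, y / ((x - t) ^ 2 + y ^ 2) = Real.pi := by
  have h1 : ∫ x : ℝ, y / ((x - t) ^ 2 + y ^ 2) = ∫ s : ℝ, y / (s ^ 2 + y ^ 2) := by
    exact integral_sub_right_eq_self (fun s => y / (s ^ 2 + y ^ 2)) t
  have h2 := Measure.integral_comp_mul_left (fun s => y / (s ^ 2 + y ^ 2)) y
  have h3 : (fun u : ℝ => y / ((y * u) ^ 2 + y ^ 2)) = fun u : ℝ => y⁻¹ * (1 + u ^ 2)⁻¹ := by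
    funext u
    have hy' : y ≠ 0 := hy.ne'
    have : (y * u) ^ 2 + y ^ 2 ≠ 0 := by positivity
    field_simp
    ring
  rw [h1]
  rw [show (fun s : ℝ => y / (s ^ 2 + y ^ 2)) = fun s => y / (s ^ 2 + y ^ 2) from rfl] at h2
  rw [h3] at h2
  rw [integral_const_mul, integral_univ_inv_one_add_sq] at h2
  rw [smul_eq_mul, abs_of_pos (inv_pos.2 hy)] at h2
  have hy' : y ≠ 0 := hy.ne'
  field_simp at h2
  linarith

lemma claimA (f : ℝ →ᵇ ℝ) {y : ℝ} (hy : 0 < y) (t : ℝ) :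
    ∫ x : ℝ, f x * (y / ((x - t) ^ 2 + y ^ 2))
      = ∫ s : ℝ, f (t + y * s) * (1 + s ^ 2)⁻¹ := by
  set h : ℝ → ℝ := fun x => f x * (y / ((x - t) ^ 2 + y ^ 2)) with hh
  have h1 : ∫ s : ℝ, h (y * s + t) = |y⁻¹| • ∫ u : ℝ, h u := by
    rw [← integral_add_right_eq_self h t]
    exact Measure.integral_comp_mul_left (fun u => h (u + t)) y
  have h2 : ∀ s : ℝ, f (t + y * s) * (1 + s ^ 2)⁻¹ = y * h (y * s + t) := by
    intro s
    rw [hh]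
    simp only [add_sub_cancel_right]
    have hy' : y ≠ 0 := hy.ne'
    have h5 : (y * s) ^ 2 + y ^ 2 ≠ 0 := by positivity
    have h6 : (1 : ℝ) + s ^ 2 ≠ 0 := by positivity
    rw [add_comm t (y * s)]
    field_simp
    ring
  simp_rw [h2]
  rw [integral_const_mul, h1, smul_eq_mul, abs_of_pos (inv_pos.2 hy)]
  field_simp

lemma claimA_integrand_integrable (f : ℝ →ᵇ ℝ) (y t : ℝ) :
    Integrable (fun s : ℝ => f (t + y * s) * (1 + s ^ 2)⁻¹) := by
  refine integrable_inv_one_add_sq.bdd_mul (c := ‖f‖) ?_ (Eventually.of_forall fun s => f.norm_coe_le_norm _)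
  exact (f.continuous.comp (continuous_const.add (continuous_const.mul continuous_id))).aestronglyMeasurable

lemma claimB (f : ℝ →ᵇ ℝ) (y t : ℝ) :
    ‖∫ s : ℝ, f (t + y * s) * (1 + s ^ 2)⁻¹‖ ≤ ‖f‖ * Real.pi := by
  calc ‖∫ s : ℝ, f (t + y * s) * (1 + s ^ 2)⁻¹‖
      ≤ ∫ s : ℝ, ‖f (t + y * s) * (1 + s ^ 2)⁻¹‖ := norm_integral_le_integral_norm _
    _ ≤ ∫ s : ℝ, ‖f‖ * (1 + s ^ 2)⁻¹ := by
        refine integral_mono ((claimA_integrand_integrable f y t).norm)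
          (integrable_inv_one_add_sq.const_mul _) fun s => ?_
        rw [norm_mul]
        have h1 : (0:ℝ) < 1 + s ^ 2 := by positivity
        rw [Real.norm_eq_abs ((1 + s^2)⁻¹), abs_of_pos (inv_pos.2 h1)]
        exact mul_le_mul_of_nonneg_right (f.norm_coe_le_norm _) (inv_pos.2 h1).le
    _ = ‖f‖ * Real.pi := by rw [integral_const_mul, integral_univ_inv_one_add_sq]

lemma claim7 (f : ℝ →ᵇ ℝ) (t : ℝ) :
    Tendsto (fun y : ℝ => ∫ s : ℝ, f (t + y * s) * (1 + s ^ 2)⁻¹)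
      (𝓝[>] (0:ℝ)) (𝓝 (Real.pi * f t)) := by
  have key : Tendsto (fun y : ℝ => ∫ s : ℝ, f (t + y * s) * (1 + s ^ 2)⁻¹)
      (𝓝[>] (0:ℝ)) (𝓝 (∫ s : ℝ, f t * (1 + s ^ 2)⁻¹)) := by
    refine tendsto_integral_filter_of_dominated_convergence
      (fun s => ‖f‖ * (1 + s ^ 2)⁻¹) ?_ ?_ (integrable_inv_one_add_sq.const_mul _) ?_
    · exact Eventually.of_forall fun y =>
        (claimA_integrand_integrable f y t).aestronglyMeasurable
    · refine Eventually.of_forall fun y => Eventually.of_forall fun s => ?_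
      rw [norm_mul]
      have h1 : (0:ℝ) < 1 + s ^ 2 := by positivity
      rw [Real.norm_eq_abs ((1 + s^2)⁻¹), abs_of_pos (inv_pos.2 h1)]
      exact mul_le_mul_of_nonneg_right (f.norm_coe_le_norm _) (inv_pos.2 h1).le
    · refine Eventually.of_forall fun s => ?_
      have h1 : Tendsto (fun y : ℝ => t + y * s) (𝓝[>] (0:ℝ)) (𝓝 t) := by
        have : Tendsto (fun y : ℝ => t + y * s) (𝓝 (0:ℝ)) (𝓝 (t + 0 * s)) :=
          (continuous_const.add (continuous_id.mul continuous_const)).tendsto 0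
        simpa using this.mono_left nhdsWithin_le_nhds
      exact (((f.continuous.tendsto t).comp h1).mul tendsto_const_nhds)
  have : ∫ s : ℝ, f t * (1 + s ^ 2)⁻¹ = Real.pi * f t := by
    rw [integral_const_mul, integral_univ_inv_one_add_sq]; ring
  rwa [this] at key

lemma claim8 (μ : Measure ℝ) [IsProbabilityMeasure μ] (f : ℝ →ᵇ ℝ) :
    Tendsto (fun y : ℝ => ∫ t : ℝ, (∫ s : ℝ, f (t + y * s) * (1 + s ^ 2)⁻¹) ∂μ)
      (𝓝[>] (0:ℝ)) (𝓝 (Real.pi * ∫ t, f t ∂μ)) := by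
  have key : Tendsto (fun y : ℝ => ∫ t : ℝ, (∫ s : ℝ, f (t + y * s) * (1 + s ^ 2)⁻¹) ∂μ)
      (𝓝[>] (0:ℝ)) (𝓝 (∫ t : ℝ, Real.pi * f t ∂μ)) := by
    refine tendsto_integral_filter_of_dominated_convergence
      (fun _ => ‖f‖ * Real.pi) ?_ ?_ (integrable_const _) ?_
    · refine Eventually.of_forall fun y => ?_
      have hcont : Continuous (fun t : ℝ => ∫ s : ℝ, f (t + y * s) * (1 + s ^ 2)⁻¹) := by
        refine continuous_of_dominated
          (fun t => (claimA_integrand_integrable f y t).aestronglyMeasurable) ?_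
          (integrable_inv_one_add_sq.const_mul ‖f‖) ?_
        · refine fun t => Eventually.of_forall fun s => ?_
          rw [norm_mul]
          have h1 : (0:ℝ) < 1 + s ^ 2 := by positivity
          rw [Real.norm_eq_abs ((1 + s^2)⁻¹), abs_of_pos (inv_pos.2 h1)]
          exact mul_le_mul_of_nonneg_right (f.norm_coe_le_norm _) (inv_pos.2 h1).le
        · refine Eventually.of_forall fun s => ?_
          exact (f.continuous.comp (continuous_id.add continuous_const)).mul continuous_const
      exact hcont.aestronglyMeasurable
    · exact Eventually.of_forall fun y => Eventually.of_forall fun t => claimB f y t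
    · exact Eventually.of_forall fun t => claim7 f t
  have : ∫ t : ℝ, Real.pi * f t ∂μ = Real.pi * ∫ t, f t ∂μ := integral_const_mul _ _
  rwa [this] at key

lemma claim9 (μ : Measure ℝ) [IsProbabilityMeasure μ] (f : ℝ →ᵇ ℝ) {y : ℝ} (hy : 0 < y) :
    ∫ t : ℝ, (∫ s : ℝ, f (t + y * s) * (1 + s ^ 2)⁻¹) ∂μ
      = ∫ x : ℝ, f x * (∫ t : ℝ, y / ((x - t) ^ 2 + y ^ 2) ∂μ) := by
  have haesm : AEStronglyMeasurable
      (fun q : ℝ × ℝ => f q.2 * (y / ((q.2 - q.1) ^ 2 + y ^ 2))) (μ.prod volume) := by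
    refine Continuous.aestronglyMeasurable ?_
    refine (f.continuous.comp continuous_snd).mul
      (continuous_const.div (((continuous_snd.sub continuous_fst).pow 2).add continuous_const)
        fun q => ?_)
    positivity
  have hint : Integrable (Function.uncurry fun t x : ℝ => f x * (y / ((x - t) ^ 2 + y ^ 2)))
      (μ.prod volume) := by
    have haesm' : AEStronglyMeasurable
        (Function.uncurry fun t x : ℝ => f x * (y / ((x - t) ^ 2 + y ^ 2))) (μ.prod volume) :=
      haesm
    rw [integrable_prod_iff haesm']
    constructor
    · refine Eventually.of_forall fun t => ?_
      exact (poisK_integrable hy t).bdd_mul f.continuous.aestronglyMeasurable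
        (Eventually.of_forall fun x => f.norm_coe_le_norm _)
    · refine (integrable_const (‖f‖ * Real.pi)).mono'
        ((haesm'.norm).integral_prod_right') (Eventually.of_forall fun t => ?_)
      simp only [Function.uncurry_apply_pair]
      have hnn : 0 ≤ ∫ x : ℝ, ‖f x * (y / ((x - t) ^ 2 + y ^ 2))‖ :=
        integral_nonneg fun x => norm_nonneg _
      rw [Real.norm_eq_abs, abs_of_nonneg hnn]
      calc ∫ x : ℝ, ‖f x * (y / ((x - t) ^ 2 + y ^ 2))‖
          ≤ ∫ x : ℝ, ‖f‖ * (y / ((x - t) ^ 2 + y ^ 2)) := by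
            refine integral_mono ?_ ((poisK_integrable hy t).const_mul _) fun x => ?_
            · exact ((poisK_integrable hy t).bdd_mul f.continuous.aestronglyMeasurable
                (Eventually.of_forall fun x => f.norm_coe_le_norm _)).norm
            · rw [norm_mul]
              have h1 : (0:ℝ) < (x - t) ^ 2 + y ^ 2 := by positivity
              have h2 : (0:ℝ) ≤ y / ((x - t) ^ 2 + y ^ 2) := by positivity
              rw [Real.norm_eq_abs (y / _), abs_of_nonneg h2]
              exact mul_le_mul_of_nonneg_right (f.norm_coe_le_norm _) h2
        _ = ‖f‖ * Real.pi := by rw [integral_const_mul, poisK_integral hy t]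
  calc ∫ t : ℝ, (∫ s : ℝ, f (t + y * s) * (1 + s ^ 2)⁻¹) ∂μ
      = ∫ t : ℝ, (∫ x : ℝ, f x * (y / ((x - t) ^ 2 + y ^ 2))) ∂μ := by
        exact integral_congr_ae (Eventually.of_forall fun t => (claimA f hy t).symm)
    _ = ∫ x : ℝ, (∫ t : ℝ, f x * (y / ((x - t) ^ 2 + y ^ 2)) ∂μ) := by
        exact integral_integral_swap hint
    _ = ∫ x : ℝ, f x * (∫ t : ℝ, y / ((x - t) ^ 2 + y ^ 2) ∂μ) := by
        refine integral_congr_ae (Eventually.of_forall fun x => ?_)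
        exact integral_const_mul _ _

lemma bcf_integral_eq {μ₁ μ₂ : Measure ℝ} [IsProbabilityMeasure μ₁] [IsProbabilityMeasure μ₂]
    (h : ∀ z : ℂ, 0 < z.im → cauchyT μ₁ z = cauchyT μ₂ z) (f : ℝ →ᵇ ℝ) :
    ∫ t, f t ∂μ₁ = ∫ t, f t ∂μ₂ := by
  have h1 := claim8 μ₁ f
  have h2 := claim8 μ₂ f
  have heq : (fun y : ℝ => ∫ t : ℝ, (∫ s : ℝ, f (t + y * s) * (1 + s ^ 2)⁻¹) ∂μ₁)
      =ᶠ[𝓝[>] (0:ℝ)] (fun y : ℝ => ∫ t : ℝ, (∫ s : ℝ, f (t + y * s) * (1 + s ^ 2)⁻¹) ∂μ₂) := by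
    filter_upwards [self_mem_nhdsWithin] with y hy
    rw [claim9 μ₁ f hy, claim9 μ₂ f hy]
    exact integral_congr_ae (Eventually.of_forall fun x =>
      congrArg (fun c => f x * c) (pois_eq h x hy))
  have h2' := h2.congr' heq.symm
  have := tendsto_nhds_unique h1 h2'
  exact mul_left_cancel₀ Real.pi_ne_zero this

lemma measures_eq {μ₁ μ₂ : Measure ℝ} [IsProbabilityMeasure μ₁] [IsProbabilityMeasure μ₂]
    (h : ∀ z : ℂ, 0 < z.im → cauchyT μ₁ z = cauchyT μ₂ z) : μ₁ = μ₂ := by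
  refine ext_of_forall_lintegral_eq_of_IsFiniteMeasure fun g => ?_
  set F : ℝ →ᵇ ℝ := g.comp _ (isometry_subtype_coe.lipschitz) with hF
  have hFg : ∀ x, F x = (g x : ℝ) := fun x => rfl
  have hi1 : Integrable (fun x => ((g x : ℝ))) μ₁ := by
    exact F.integrable μ₁
  have hi2 : Integrable (fun x => ((g x : ℝ))) μ₂ := by
    exact F.integrable μ₂
  rw [lintegral_coe_eq_integral g hi1, lintegral_coe_eq_integral g hi2]
  congr 1
  have := bcf_integral_eq h F
  simpa [hFg] using this

/-- `d(μ₁,μ₂) = sup_{Im z ≥ 1} |G_{μ₁}(z) − G_{μ₂}(z)|` is a metric on Borel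
probability measures on `ℝ`: it vanishes on the diagonal, separates points, is symmetric,
and satisfies the triangle inequality. -/
theorem cdist_is_metric :
    (∀ μ₁ μ₂ : Measure ℝ, IsProbabilityMeasure μ₁ → IsProbabilityMeasure μ₂ →
        0 ≤ cdist μ₁ μ₂) ∧
    (∀ μ : Measure ℝ, IsProbabilityMeasure μ → cdist μ μ = 0) ∧
    (∀ μ₁ μ₂ : Measure ℝ, IsProbabilityMeasure μ₁ → IsProbabilityMeasure μ₂ →
        cdist μ₁ μ₂ = 0 → μ₁ = μ₂) ∧
    (∀ μ₁ μ₂ : Measure ℝ, IsProbabilityMeasure μ₁ → IsProbabilityMeasure μ₂ →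
        cdist μ₁ μ₂ = cdist μ₂ μ₁) ∧
    (∀ μ₁ μ₂ μ₃ : Measure ℝ, IsProbabilityMeasure μ₁ → IsProbabilityMeasure μ₂ →
        IsProbabilityMeasure μ₃ → cdist μ₁ μ₃ ≤ cdist μ₁ μ₂ + cdist μ₂ μ₃) := by
  refine ⟨?_, ?_, ?_, ?_, ?_⟩
  · intro μ₁ μ₂ _ _
    exact cdist_nonneg μ₁ μ₂
  · intro μ _
    exact cdist_self μ
  · intro μ₁ μ₂ h1 h2 h
    exact measures_eq (cauchyT_eqOn_upper fun z hz => cauchyT_eq_of_cdist_eq_zero h hz)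
  · intro μ₁ μ₂ _ _
    exact cdist_symm μ₁ μ₂
  · intro μ₁ μ₂ μ₃ h1 h2 h3
    exact cdist_triangle μ₁ μ₂ μ₃

end
end

section
/- A sequence (μ_n)_{n≥1} of Borel probability measures on ℝ converges weakly to a Borel probability measure μ on ℝ if and only if for every z ∈ ℂ with Im(z) ≥ 1 one has lim_{n→∞} G_{μ_n}(z) = G_μ(z). -/
open MeasureTheory Filter
open scoped ENNReal Topology

noncomputable section

namespace WCCT
open Real Finset

/-- product of resolvents at shifted nodes -/
def Qf (z : ℂ) (h : ℝ) (k : ℕ) (t : ℝ) : ℂ :=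
  ∏ j ∈ Finset.range (k+1), (z + (j:ℝ)*h - (t:ℂ))⁻¹

/-- Poisson kernel -/
def Pk (y u : ℝ) : ℝ := (y / π) * (u^2 + y^2)⁻¹

/-- the tightness control function -/
def gR (R t : ℝ) : ℝ := 2 * t^2 / (t^2 + R^2)

/-- smoothed density -/
def pkf (ρ : Measure ℝ) (y x : ℝ) : ℝ := ∫ t, Pk y (x - t) ∂ρ


lemma res_ne_zero {z : ℂ} (hz : 0 < z.im) (t : ℝ) : z - (t:ℂ) ≠ 0 := by
  intro h
  have h2 : (z - (t:ℂ)).im = 0 := by rw [h]; simp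
  simp only [Complex.sub_im, Complex.ofReal_im, sub_zero] at h2
  linarith

lemma res_norm_le {z : ℂ} (hz : 0 < z.im) (t : ℝ) : ‖(z - (t:ℂ))⁻¹‖ ≤ (z.im)⁻¹ := by
  rw [norm_inv]
  have h1 : z.im ≤ ‖z - (t:ℂ)‖ := by
    have h2 := Complex.abs_im_le_norm (z - (t:ℂ))
    simp only [Complex.sub_im, Complex.ofReal_im, sub_zero] at h2
    exact (le_abs_self _).trans h2
  exact inv_anti₀ hz h1

lemma res_cont {z : ℂ} (hz : 0 < z.im) : Continuous fun t : ℝ => (z - (t:ℂ))⁻¹ :=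
  (continuous_const.sub Complex.continuous_ofReal).inv₀ fun t => res_ne_zero hz t

lemma integrable_bdd {E : Type*} [NormedAddCommGroup E] (ρ : Measure ℝ) [IsProbabilityMeasure ρ]
    {g : ℝ → E} (hg : Continuous g) {C : ℝ} (hb : ∀ t, ‖g t‖ ≤ C) : Integrable g ρ :=
  (integrable_const C).mono' hg.aestronglyMeasurable (ae_of_all _ hb)

variable {μ : ℕ → Measure ℝ} {ν : Measure ℝ}

lemma convA (hμ : ∀ n, IsProbabilityMeasure (μ n)) (hν : IsProbabilityMeasure ν)
    {g : ℝ → ℂ}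
    (happ : ∀ ε : ℝ, 0 < ε → ∃ g' : ℝ → ℂ, Continuous g' ∧ (∃ C, ∀ t, ‖g' t‖ ≤ C) ∧
      (∀ t, ‖g t - g' t‖ ≤ ε) ∧
      Tendsto (fun n => ∫ t, g' t ∂(μ n)) atTop (𝓝 (∫ t, g' t ∂ν)))
    (hg : Continuous g) {C : ℝ} (hb : ∀ t, ‖g t‖ ≤ C) :
    Tendsto (fun n => ∫ t, g t ∂(μ n)) atTop (𝓝 (∫ t, g t ∂ν)) := by
  rw [Metric.tendsto_atTop]
  intro ε hε
  obtain ⟨g', hc', ⟨C', hb'⟩, hclose, htend⟩ := happ (ε/4) (by linarith)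
  obtain ⟨N, hN⟩ := Metric.tendsto_atTop.1 htend (ε/4) (by linarith)
  refine ⟨N, fun n hn => ?_⟩
  haveI := hμ n
  have key : ∀ (ρ : Measure ℝ), IsProbabilityMeasure ρ → ‖∫ t, g t ∂ρ - ∫ t, g' t ∂ρ‖ ≤ ε/4 := by
    intro ρ hρ
    haveI := hρ
    rw [← integral_sub (integrable_bdd ρ hg hb) (integrable_bdd ρ hc' hb')]
    have := norm_integral_le_of_norm_le (g := fun _ : ℝ => ε/4)
      (integrable_const _) (ae_of_all ρ fun t => hclose t)
    simpa using this
  have h1 := key (μ n) (hμ n)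
  have h2 := key ν hν
  have h3 := hN n hn
  rw [dist_eq_norm] at h3 ⊢
  calc ‖∫ t, g t ∂μ n - ∫ t, g t ∂ν‖
      ≤ ‖∫ t, g t ∂μ n - ∫ t, g' t ∂μ n‖ + ‖∫ t, g' t ∂μ n - ∫ t, g' t ∂ν‖
          + ‖∫ t, g' t ∂ν - ∫ t, g t ∂ν‖ := by
        have := norm_sub_le_norm_sub_add_norm_sub (∫ t, g t ∂μ n) (∫ t, g' t ∂ν) (∫ t, g t ∂ν)
        have h4 := norm_sub_le_norm_sub_add_norm_sub (∫ t, g t ∂μ n) (∫ t, g' t ∂μ n) (∫ t, g' t ∂ν)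
        linarith
    _ < ε := by
        have h5 : ‖∫ t, g' t ∂ν - ∫ t, g t ∂ν‖ = ‖∫ t, g t ∂ν - ∫ t, g' t ∂ν‖ := norm_sub_rev _ _
        linarith





lemma node_ne_zero {z : ℂ} (hz : 0 < z.im) (c t : ℝ) : z + (c:ℂ) - (t:ℂ) ≠ 0 := by
  intro h
  have h2 : (z + (c:ℂ) - (t:ℂ)).im = 0 := by rw [h]; simp
  simp only [Complex.sub_im, Complex.add_im, Complex.ofReal_im, add_zero, sub_zero] at h2
  linarith

lemma node_norm_le {z : ℂ} (hz : 0 < z.im) (c t : ℝ) : ‖(z + (c:ℂ) - (t:ℂ))⁻¹‖ ≤ (z.im)⁻¹ := by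
  rw [norm_inv]
  have h1 : z.im ≤ ‖z + (c:ℂ) - (t:ℂ)‖ := by
    have h2 := Complex.abs_im_le_norm (z + (c:ℂ) - (t:ℂ))
    simp only [Complex.sub_im, Complex.add_im, Complex.ofReal_im, add_zero, sub_zero] at h2
    exact (le_abs_self _).trans h2
  exact inv_anti₀ hz h1

lemma node_norm_le_one {z : ℂ} (hz : 1 ≤ z.im) (c t : ℝ) : ‖(z + (c:ℂ) - (t:ℂ))⁻¹‖ ≤ 1 := by
  have hz0 : 0 < z.im := lt_of_lt_of_le one_pos hz
  refine (node_norm_le hz0 c t).trans ?_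
  rw [inv_le_one_iff₀]
  right; exact hz

lemma Qf_cont {z : ℂ} (hz : 0 < z.im) (h : ℝ) (k : ℕ) : Continuous (Qf z h k) := by
  apply continuous_finset_prod
  intro j _
  have : Continuous fun t : ℝ => z + ((j:ℝ)*h : ℂ) - (t:ℂ) :=
    continuous_const.sub Complex.continuous_ofReal
  refine this.inv₀ fun t => ?_
  have h2 := node_ne_zero hz ((j:ℝ)*h) t
  push_cast at h2 ⊢
  exact h2

lemma Qf_norm_le {z : ℂ} (hz : 1 ≤ z.im) (h : ℝ) (k : ℕ) (t : ℝ) : ‖Qf z h k t‖ ≤ 1 := by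
  unfold Qf
  refine (Finset.norm_prod_le _ _).trans
    (Finset.prod_le_one (fun j _ => norm_nonneg _) (fun j _ => ?_))
  have h1 := node_norm_le_one hz ((j:ℝ)*h) t
  push_cast at h1 ⊢
  exact h1

lemma Qf_rec (z : ℂ) (hz : 0 < z.im) {h : ℝ} (hh : h ≠ 0) (k : ℕ) (t : ℝ) :
    Qf z h (k+1) t = (((k:ℂ)+1) * (h:ℂ))⁻¹ * (Qf z h k t - Qf (z + h) h k t) := by
  set a : ℕ → ℂ := fun j => (z + (j:ℂ)*(h:ℂ) - (t:ℂ))⁻¹ with ha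
  have hnz : ∀ j : ℕ, z + (j:ℂ) * (h:ℂ) - (t:ℂ) ≠ 0 := by
    intro j
    have := node_ne_zero hz ((j:ℝ)*h) t
    push_cast at this
    exact this
  have haq : ∀ m : ℕ, Qf z h m t = ∏ j ∈ Finset.range (m+1), a j := by
    intro m
    refine Finset.prod_congr rfl fun j _ => ?_
    simp only [ha]
    push_cast
    ring_nf
  have hshift : Qf (z + h) h k t = ∏ j ∈ Finset.range (k+1), a (j+1) := by
    refine Finset.prod_congr rfl fun j _ => ?_
    simp only [ha]
    push_cast
    ring_nf
  set M : ℂ := ∏ j ∈ Finset.range k, a (j+1) with hM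
  have e1 : Qf z h (k+1) t = (M * a (k+1)) * a 0 := by
    rw [haq (k+1), Finset.prod_range_succ' a (k+1), Finset.prod_range_succ]
  have e2 : Qf z h k t = M * a 0 := by
    rw [haq k, Finset.prod_range_succ' a k]
  have e3 : Qf (z + h) h k t = M * a (k+1) := by
    rw [hshift, Finset.prod_range_succ]
  have h0' : z - (t:ℂ) ≠ 0 := by
    have h2 := hnz 0
    push_cast at h2
    simpa using h2
  have hd : (z + ((k:ℂ)+1)*(h:ℂ) - (t:ℂ)) ≠ 0 := by
    have h2 := hnz (k+1)
    push_cast at h2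
    exact h2
  have e0 : a 0 = (z - (t:ℂ))⁻¹ := by simp [ha]
  have ed : a (k+1) = (z + ((k:ℂ)+1)*(h:ℂ) - (t:ℂ))⁻¹ := by
    simp only [ha]
    congr 1
    push_cast
    ring
  have key : a 0 - a (k+1) = (((k:ℂ)+1) * (h:ℂ)) * (a 0 * a (k+1)) := by
    calc a 0 - a (k+1) = (z - (t:ℂ))⁻¹ - (z + ((k:ℂ)+1)*(h:ℂ) - (t:ℂ))⁻¹ := by rw [e0, ed]
      _ = ((z + ((k:ℂ)+1)*(h:ℂ) - (t:ℂ)) - (z - (t:ℂ)))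
            / ((z - (t:ℂ)) * (z + ((k:ℂ)+1)*(h:ℂ) - (t:ℂ))) := inv_sub_inv h0' hd
      _ = (((k:ℂ)+1) * (h:ℂ)) / ((z - (t:ℂ)) * (z + ((k:ℂ)+1)*(h:ℂ) - (t:ℂ))) := by
            congr 1; ring
      _ = (((k:ℂ)+1) * (h:ℂ)) * (a 0 * a (k+1)) := by
            rw [e0, ed, div_eq_mul_inv, mul_inv]
  have hkh : (((k:ℂ)+1) * (h:ℂ)) ≠ 0 := by
    apply mul_ne_zero
    · have : ((k:ℂ)+1) = ((k+1 : ℕ) : ℂ) := by push_cast; ring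
      rw [this]
      exact Nat.cast_ne_zero.mpr (Nat.succ_ne_zero k)
    · exact Complex.ofReal_ne_zero.mpr hh
  rw [e1, e2, e3]
  have e4 : M * a 0 - M * a (k+1) = (((k:ℂ)+1) * (h:ℂ)) * (M * a (k+1) * a 0) := by
    calc M * a 0 - M * a (k+1) = M * (a 0 - a (k+1)) := by ring
      _ = (((k:ℂ)+1) * (h:ℂ)) * (M * a (k+1) * a 0) := by rw [key]; ring
  rw [e4, inv_mul_cancel_left₀ hkh]



variable {μ : ℕ → Measure ℝ} {ν : Measure ℝ}

lemma res_norm_le_one {z : ℂ} (hz : 1 ≤ z.im) (t : ℝ) : ‖(z - (t:ℂ))⁻¹‖ ≤ 1 := by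
  have hz0 : 0 < z.im := lt_of_lt_of_le one_pos hz
  refine (res_norm_le hz0 t).trans ?_
  rw [inv_le_one_iff₀]; right; exact hz

lemma P1 (hμ : ∀ n, IsProbabilityMeasure (μ n)) (hν : IsProbabilityMeasure ν)
    (H : ∀ z : ℂ, 1 ≤ z.im → Tendsto (fun n => ∫ t, (z - (t:ℂ))⁻¹ ∂(μ n)) atTop
      (𝓝 (∫ t, (z - (t:ℂ))⁻¹ ∂ν))) :
    ∀ (k : ℕ) (z : ℂ), 1 ≤ z.im → ∀ h : ℝ, h ≠ 0 →
      Tendsto (fun n => ∫ t, Qf z h k t ∂(μ n)) atTop (𝓝 (∫ t, Qf z h k t ∂ν)) := by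
  intro k
  induction k with
  | zero =>
    intro z hz h hh
    have he : ∀ t : ℝ, Qf z h 0 t = (z - (t:ℂ))⁻¹ := by
      intro t; simp [Qf]
    simp only [he]
    exact H z hz
  | succ k ih =>
    intro z hz h hh
    have hz0 : 0 < z.im := lt_of_lt_of_le one_pos hz
    have hz' : 1 ≤ (z + (h:ℂ)).im := by simpa using hz
    have hz0' : 0 < (z + (h:ℂ)).im := lt_of_lt_of_le one_pos hz'
    have key : ∀ (ρ : Measure ℝ), IsProbabilityMeasure ρ →
        ∫ t, Qf z h (k+1) t ∂ρ =
          (((k:ℂ)+1) * (h:ℂ))⁻¹ * ((∫ t, Qf z h k t ∂ρ) - ∫ t, Qf (z + h) h k t ∂ρ) := by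
      intro ρ hρ
      haveI := hρ
      calc ∫ t, Qf z h (k+1) t ∂ρ
          = ∫ t, (((k:ℂ)+1) * (h:ℂ))⁻¹ * (Qf z h k t - Qf (z + h) h k t) ∂ρ := by
            refine integral_congr_ae (ae_of_all _ fun t => ?_)
            exact Qf_rec z hz0 hh k t
        _ = (((k:ℂ)+1) * (h:ℂ))⁻¹ * ∫ t, (Qf z h k t - Qf (z + h) h k t) ∂ρ :=
            by rw [integral_const_mul]
        _ = (((k:ℂ)+1) * (h:ℂ))⁻¹ * ((∫ t, Qf z h k t ∂ρ) - ∫ t, Qf (z + h) h k t ∂ρ) := by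
            rw [integral_sub (integrable_bdd ρ (Qf_cont hz0 h k) (Qf_norm_le hz h k))
              (integrable_bdd ρ (Qf_cont hz0' h k) (Qf_norm_le hz' h k))]
    simp only [fun n => key (μ n) (hμ n), key ν hν]
    exact ((ih z hz h hh).sub (ih (z + h) hz' h hh)).const_mul _

lemma prod_diff_bound (a b : ℕ → ℂ) (ha : ∀ j, ‖a j‖ ≤ 1) (hb : ∀ j, ‖b j‖ ≤ 1) :
    ∀ m : ℕ, ‖(∏ j ∈ Finset.range m, a j) - ∏ j ∈ Finset.range m, b j‖ ≤
      ∑ j ∈ Finset.range m, ‖a j - b j‖ := by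
  intro m
  induction m with
  | zero => simp
  | succ m ih =>
    have hsplit : (∏ j ∈ Finset.range (m+1), a j) - ∏ j ∈ Finset.range (m+1), b j =
        (∏ j ∈ Finset.range m, a j) * (a m - b m) +
          ((∏ j ∈ Finset.range m, a j) - ∏ j ∈ Finset.range m, b j) * b m := by
      rw [Finset.prod_range_succ, Finset.prod_range_succ]; ring
    rw [hsplit, Finset.sum_range_succ]
    have hpa : ‖∏ j ∈ Finset.range m, a j‖ ≤ 1 :=
      (Finset.norm_prod_le _ _).trans
        (Finset.prod_le_one (fun j _ => norm_nonneg _) (fun j _ => ha j))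
    have t1 : ‖(∏ j ∈ Finset.range m, a j) * (a m - b m)‖ ≤ ‖a m - b m‖ := by
      rw [norm_mul]
      exact mul_le_of_le_one_left (norm_nonneg _) hpa
    have t2 : ‖((∏ j ∈ Finset.range m, a j) - ∏ j ∈ Finset.range m, b j) * b m‖ ≤
        ∑ j ∈ Finset.range m, ‖a j - b j‖ := by
      rw [norm_mul]
      calc ‖(∏ j ∈ Finset.range m, a j) - ∏ j ∈ Finset.range m, b j‖ * ‖b m‖
          ≤ (∑ j ∈ Finset.range m, ‖a j - b j‖) * 1 :=
            mul_le_mul ih (hb m) (norm_nonneg _)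
              (Finset.sum_nonneg fun j _ => norm_nonneg _)
        _ = _ := mul_one _
    calc ‖_ + _‖ ≤ ‖(∏ j ∈ Finset.range m, a j) * (a m - b m)‖ +
          ‖((∏ j ∈ Finset.range m, a j) - ∏ j ∈ Finset.range m, b j) * b m‖ := norm_add_le _ _
      _ ≤ (∑ j ∈ Finset.range m, ‖a j - b j‖) + ‖a m - b m‖ := by
          have := add_le_add t1 t2
          linarith

lemma P2 (hμ : ∀ n, IsProbabilityMeasure (μ n)) (hν : IsProbabilityMeasure ν)
    (H : ∀ z : ℂ, 1 ≤ z.im → Tendsto (fun n => ∫ t, (z - (t:ℂ))⁻¹ ∂(μ n)) atTop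
      (𝓝 (∫ t, (z - (t:ℂ))⁻¹ ∂ν))) (k : ℕ) (z : ℂ) (hz : 1 ≤ z.im) :
    Tendsto (fun n => ∫ t, ((z - (t:ℂ))⁻¹)^(k+1) ∂(μ n)) atTop
      (𝓝 (∫ t, ((z - (t:ℂ))⁻¹)^(k+1) ∂ν)) := by
  have hz0 : 0 < z.im := lt_of_lt_of_le one_pos hz
  refine convA hμ hν ?_ ((res_cont hz0).pow _)
    (C := 1) (fun t => by
      rw [norm_pow]
      exact pow_le_one₀ (norm_nonneg _) (res_norm_le_one hz t))
  intro ε hε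
  set h : ℝ := ε / (((k:ℝ)+1)^2 + 1) with hdef
  have hpos : 0 < ((k:ℝ)+1)^2 + 1 := by positivity
  have hh0 : 0 < h := div_pos hε hpos
  refine ⟨Qf z h k, Qf_cont hz0 h k, ⟨1, Qf_norm_le hz h k⟩, ?_, P1 hμ hν H k z hz h (ne_of_gt hh0)⟩
  intro t
  -- pointwise bound
  have hbd : ‖((z - (t:ℂ))⁻¹)^(k+1) - Qf z h k t‖ ≤ ((k:ℝ)+1)^2 * h := by
    have hpow : ((z - (t:ℂ))⁻¹)^(k+1) = ∏ _j ∈ Finset.range (k+1), (z - (t:ℂ))⁻¹ := by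
      rw [Finset.prod_const, Finset.card_range]
    rw [hpow, Qf, norm_sub_rev]
    refine (prod_diff_bound _ _ (fun j => ?_) (fun j => res_norm_le_one hz t) (k+1)).trans ?_
    · have h1 := node_norm_le_one hz ((j:ℝ)*h) t
      push_cast at h1 ⊢
      exact h1
    · have each : ∀ j ∈ Finset.range (k+1),
          ‖(z + (j:ℝ)*h - (t:ℂ))⁻¹ - (z - (t:ℂ))⁻¹‖ ≤ ((k:ℝ)+1) * h := by
        intro j hj
        have hnzj : z + (((j:ℝ)*h : ℝ):ℂ) - (t:ℂ) ≠ 0 := node_ne_zero hz0 _ t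
        have hnz0 : z - (t:ℂ) ≠ 0 := res_ne_zero hz0 t
        have hid : (z + (j:ℝ)*h - (t:ℂ))⁻¹ - (z - (t:ℂ))⁻¹ =
            ((z - (t:ℂ)) - (z + (j:ℝ)*h - (t:ℂ))) *
              ((z + (j:ℝ)*h - (t:ℂ))⁻¹ * (z - (t:ℂ))⁻¹) := by
          have h2 : z + (((j:ℝ)*h : ℝ):ℂ) - (t:ℂ) = z + (j:ℝ)*h - (t:ℂ) := by push_cast; ring
          rw [inv_sub_inv (h2 ▸ hnzj) hnz0, div_eq_mul_inv, mul_inv]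
        rw [hid]
        have hnum : ‖(z - (t:ℂ)) - (z + (j:ℝ)*h - (t:ℂ))‖ = (j:ℝ) * |h| := by
          have h3 : (z - (t:ℂ)) - (z + (j:ℝ)*h - (t:ℂ)) = ((-( (j:ℝ)*h) : ℝ) : ℂ) := by
            push_cast; ring
          rw [h3, Complex.norm_real, Real.norm_eq_abs, abs_neg, abs_mul, Nat.abs_cast]
        rw [norm_mul, hnum]
        have hfac : ‖(z + (j:ℝ)*h - (t:ℂ))⁻¹ * (z - (t:ℂ))⁻¹‖ ≤ 1 := by
          rw [norm_mul]
          have h1 := node_norm_le_one hz ((j:ℝ)*h) t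
          push_cast at h1
          exact mul_le_one₀ h1 (norm_nonneg _) (res_norm_le_one hz t)
        have hjk : j ≤ k := Nat.lt_succ_iff.mp (Finset.mem_range.mp hj)
        have hj' : (j:ℝ) ≤ (k:ℝ) + 1 := by
          have h4 : (j:ℝ) ≤ (k:ℝ) := by exact_mod_cast hjk
          linarith
        calc (j:ℝ) * |h| * ‖(z + (j:ℝ)*h - (t:ℂ))⁻¹ * (z - (t:ℂ))⁻¹‖
            ≤ (j:ℝ) * |h| * 1 := by
              refine mul_le_mul_of_nonneg_left hfac ?_
              positivity
          _ ≤ ((k:ℝ)+1) * h := by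
              rw [mul_one, abs_of_pos hh0]
              exact mul_le_mul_of_nonneg_right hj' hh0.le
      refine (Finset.sum_le_sum each).trans ?_
      rw [Finset.sum_const, Finset.card_range, nsmul_eq_mul]
      refine le_of_eq ?_
      push_cast
      ring
  refine hbd.trans ?_
  calc ((k:ℝ)+1)^2 * h = ε * (((k:ℝ)+1)^2 / (((k:ℝ)+1)^2 + 1)) := by rw [hdef]; ring
    _ ≤ ε * 1 := mul_le_mul_of_nonneg_left ((div_le_one hpos).mpr (by linarith)) hε.le
    _ = ε := mul_one ε


lemma geom_id {c w : ℂ} (t : ℝ) (hc : c - (t:ℂ) ≠ 0) (hw : w - (t:ℂ) ≠ 0) :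
    ∀ K : ℕ, (w - (t:ℂ))⁻¹ - ∑ k ∈ Finset.range K, (c - w)^k * ((c - (t:ℂ))⁻¹)^(k+1)
      = (w - (t:ℂ))⁻¹ * ((c - w) * (c - (t:ℂ))⁻¹)^K := by
  intro K
  induction K with
  | zero => simp
  | succ K ih =>
    rw [Finset.sum_range_succ]
    have hstep : (w - (t:ℂ))⁻¹ -
        ((∑ k ∈ Finset.range K, (c - w)^k * ((c - (t:ℂ))⁻¹)^(k+1)) +
          (c - w)^K * ((c - (t:ℂ))⁻¹)^(K+1)) =
        ((w - (t:ℂ))⁻¹ - ∑ k ∈ Finset.range K, (c - w)^k * ((c - (t:ℂ))⁻¹)^(k+1)) -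
          (c - w)^K * ((c - (t:ℂ))⁻¹)^(K+1) := by ring
    rw [hstep, ih]
    have hsub : (w - (t:ℂ))⁻¹ - (c - (t:ℂ))⁻¹ =
        (c - w) * ((w - (t:ℂ))⁻¹ * (c - (t:ℂ))⁻¹) := by
      rw [inv_sub_inv hw hc, div_eq_mul_inv, mul_inv]
      congr 1
      ring
    calc (w - (t:ℂ))⁻¹ * ((c - w) * (c - (t:ℂ))⁻¹)^K - (c - w)^K * ((c - (t:ℂ))⁻¹)^(K+1)
        = ((c - w) * (c - (t:ℂ))⁻¹)^K * ((w - (t:ℂ))⁻¹ - (c - (t:ℂ))⁻¹) := by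
          rw [mul_pow, pow_succ]
          ring
      _ = (w - (t:ℂ))⁻¹ * ((c - w) * (c - (t:ℂ))⁻¹)^(K+1) := by
          rw [hsub, pow_succ]
          ring

lemma P3 (hμ : ∀ n, IsProbabilityMeasure (μ n)) (hν : IsProbabilityMeasure ν)
    (H : ∀ z : ℂ, 1 ≤ z.im → Tendsto (fun n => ∫ t, (z - (t:ℂ))⁻¹ ∂(μ n)) atTop
      (𝓝 (∫ t, (z - (t:ℂ))⁻¹ ∂ν))) (z : ℂ) (hz : 0 < z.im) :
    Tendsto (fun n => ∫ t, (z - (t:ℂ))⁻¹ ∂(μ n)) atTop (𝓝 (∫ t, (z - (t:ℂ))⁻¹ ∂ν)) := by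
  rcases le_or_gt 1 z.im with h1 | h1
  · exact H z h1
  · set c : ℂ := (z.re : ℂ) + 2*Complex.I with hc
    have hcim : c.im = 2 := by simp [hc]
    have hc1 : (1:ℝ) ≤ c.im := by rw [hcim]; norm_num
    have hc0 : (0:ℝ) < c.im := by rw [hcim]; norm_num
    have hcz : c - z = ((2 - z.im : ℝ) : ℂ) * Complex.I := by
      apply Complex.ext <;> simp [hc]
    have hnorm_cz : ‖c - z‖ = 2 - z.im := by
      rw [hcz, norm_mul, Complex.norm_real, Complex.norm_I, mul_one, Real.norm_eq_abs,
        abs_of_pos (by linarith)]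
    set q : ℝ := (2 - z.im)/2 with hq
    have hq1 : q < 1 := by rw [hq]; linarith
    have hq0 : 0 ≤ q := by rw [hq]; linarith
    refine convA hμ hν ?_ (res_cont hz) (C := (z.im)⁻¹) (res_norm_le hz)
    intro ε hε
    obtain ⟨K, hK⟩ := exists_pow_lt_of_lt_one (mul_pos hε hz) hq1
    refine ⟨fun t => ∑ k ∈ Finset.range K, (c - z)^k * ((c - (t:ℂ))⁻¹)^(k+1), ?_, ?_, ?_, ?_⟩
    · exact continuous_finset_sum _ fun k _ => continuous_const.mul ((res_cont hc0).pow _)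
    · refine ⟨∑ k ∈ Finset.range K, ‖(c - z)^k‖, fun t => ?_⟩
      refine (norm_sum_le _ _).trans (Finset.sum_le_sum fun k _ => ?_)
      rw [norm_mul]
      refine mul_le_of_le_one_right (norm_nonneg _) ?_
      rw [norm_pow]
      exact pow_le_one₀ (norm_nonneg _) (res_norm_le_one hc1 t)
    · intro t
      rw [geom_id t (res_ne_zero hc0 t) (res_ne_zero hz t) K, norm_mul, norm_pow, norm_mul]
      have h2 : ‖(c - (t:ℂ))⁻¹‖ ≤ 2⁻¹ := by
        have h3 := res_norm_le hc0 t
        rw [hcim] at h3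
        exact h3
      have hfac : ‖c - z‖ * ‖(c - (t:ℂ))⁻¹‖ ≤ q := by
        rw [hq, hnorm_cz]
        calc (2 - z.im) * ‖(c - (t:ℂ))⁻¹‖ ≤ (2 - z.im) * 2⁻¹ :=
              mul_le_mul_of_nonneg_left h2 (by linarith)
          _ = (2 - z.im)/2 := by ring
      calc ‖(z - (t:ℂ))⁻¹‖ * (‖c - z‖ * ‖(c - (t:ℂ))⁻¹‖)^K ≤ (z.im)⁻¹ * q^K :=
            mul_le_mul (res_norm_le hz t) (pow_le_pow_left₀ (by positivity) hfac K)
              (by positivity) (by positivity)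
        _ ≤ ε := by
            have h4 := mul_lt_mul_of_pos_left hK (inv_pos.mpr hz)
            have h5 : (z.im)⁻¹ * (ε * z.im) = ε := by field_simp
            rw [h5] at h4
            exact h4.le
    · have key : ∀ ρ : Measure ℝ, IsProbabilityMeasure ρ →
          ∫ t, (∑ k ∈ Finset.range K, (c - z)^k * ((c - (t:ℂ))⁻¹)^(k+1)) ∂ρ =
            ∑ k ∈ Finset.range K, (c - z)^k * ∫ t, ((c - (t:ℂ))⁻¹)^(k+1) ∂ρ := by
        intro ρ hρ
        haveI := hρ
        rw [integral_finset_sum]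
        · exact Finset.sum_congr rfl fun k _ => by rw [integral_const_mul]
        · intro k _
          refine integrable_bdd ρ (continuous_const.mul ((res_cont hc0).pow _))
            (C := ‖(c - z)^k‖) fun t => ?_
          rw [norm_mul]
          refine mul_le_of_le_one_right (norm_nonneg _) ?_
          rw [norm_pow]
          exact pow_le_one₀ (norm_nonneg _) (res_norm_le_one hc1 t)
      simp only [fun n => key (μ n) (hμ n), key ν hν]
      exact tendsto_finset_sum _ fun k _ => ((P2 hμ hν H k c hc1).const_mul _)


/-- Poisson kernel -/
lemma Pk_nonneg {y : ℝ} (hy : 0 < y) (u : ℝ) : 0 ≤ Pk y u := by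
  unfold Pk
  have := pi_pos
  positivity

lemma Pk_cont {y : ℝ} (hy : 0 < y) : Continuous (Pk y) := by
  unfold Pk
  refine continuous_const.mul (Continuous.inv₀ (by continuity) fun u => by positivity)

lemma integrable_inv_sq_add {c : ℝ} (hc : 0 < c) :
    Integrable (fun u : ℝ => (u^2 + c^2)⁻¹) := by
  set K : ℝ := max 1 (c^2)⁻¹ with hK
  have hK1 : (1:ℝ) ≤ K := le_max_left _ _
  have hK2 : (c^2)⁻¹ ≤ K := le_max_right _ _
  have hK0 : (0:ℝ) < K := lt_of_lt_of_le one_pos hK1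
  refine (integrable_inv_one_add_sq.const_mul K).mono'
    ((Continuous.inv₀ (by continuity) fun u => by positivity).aestronglyMeasurable)
    (ae_of_all _ fun u => ?_)
  rw [Real.norm_eq_abs, abs_of_pos (by positivity)]
  have h1 : 1 + u^2 ≤ K * (u^2 + c^2) := by
    have hKc : 1 ≤ K * c^2 := by
      have h2 := mul_le_mul_of_nonneg_right hK2 (sq_nonneg c)
      rwa [inv_mul_cancel₀ (ne_of_gt (by positivity : (0:ℝ) < c^2))] at h2
    nlinarith [sq_nonneg u]
  have h2 : K * (1 + u^2)⁻¹ = ((1 + u^2)/K)⁻¹ := by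
    rw [div_eq_mul_inv, mul_inv, inv_inv]
    ring
  rw [h2]
  exact inv_anti₀ (by positivity) ((div_le_iff₀ hK0).mpr (by linarith))

lemma integral_inv_sq_add {y : ℝ} (hy : 0 < y) : (∫ u : ℝ, (u^2 + y^2)⁻¹) = π / y := by
  have h : ∀ u : ℝ, (u^2 + y^2)⁻¹ = y⁻¹ * (y⁻¹ * (1 + (u/y)^2)⁻¹) := by
    intro u
    rw [← mul_assoc]
    rw [eq_comm, mul_inv_eq_iff_eq_mul₀ (by positivity)]
    field_simp
    ring
  calc (∫ u : ℝ, (u^2 + y^2)⁻¹) = ∫ u : ℝ, y⁻¹ * (y⁻¹ * (1 + (u/y)^2)⁻¹) := by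
        exact integral_congr_ae (ae_of_all _ h)
    _ = y⁻¹ * (y⁻¹ * ∫ u : ℝ, (1 + (u/y)^2)⁻¹) := by
        rw [integral_const_mul, integral_const_mul]
    _ = y⁻¹ * (y⁻¹ * (|y| • ∫ v : ℝ, (1 + v^2)⁻¹)) := by
        rw [MeasureTheory.Measure.integral_comp_div (fun v : ℝ => (1 + v^2)⁻¹) y]
    _ = π / y := by
        rw [integral_univ_inv_one_add_sq, abs_of_pos hy, smul_eq_mul]
        field_simp

lemma integrable_Pk {y : ℝ} (hy : 0 < y) : Integrable (Pk y) :=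
  (integrable_inv_sq_add hy).const_mul _

lemma integral_Pk {y : ℝ} (hy : 0 < y) : (∫ u : ℝ, Pk y u) = 1 := by
  unfold Pk
  rw [integral_const_mul, integral_inv_sq_add hy]
  field_simp

lemma integral_Pk_shift {y : ℝ} (hy : 0 < y) (t : ℝ) : (∫ x : ℝ, Pk y (x - t)) = 1 := by
  rw [integral_sub_right_eq_self (Pk y) t]
  exact integral_Pk hy

/-- Poisson kernel as the imaginary part of the resolvent -/
lemma Pk_eq_im {y : ℝ} (hy : 0 < y) (x t : ℝ) :
    Pk y (x - t) = -((((x:ℂ) + (y:ℝ) * Complex.I - (t:ℂ))⁻¹).im) / π := by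
  set w : ℂ := (x:ℂ) + (y:ℝ) * Complex.I - (t:ℂ) with hw
  have hre : w.re = x - t := by simp [hw]
  have him : w.im = y := by simp [hw]
  have hns : Complex.normSq w = (x - t)^2 + y^2 := by
    rw [Complex.normSq_apply, hre, him]
    ring
  rw [Complex.inv_im, him, hns]
  unfold Pk
  field_simp

/-- the tightness control function -/
lemma gR_nonneg {R : ℝ} (hR : 0 < R) (t : ℝ) : 0 ≤ gR R t := by
  unfold gR; positivity

lemma gR_cont {R : ℝ} (hR : 0 < R) : Continuous (gR R) := by
  unfold gR
  exact (continuous_const.mul (continuous_pow 2)).div (by continuity) (fun t => by positivity)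

lemma gR_le_two {R : ℝ} (hR : 0 < R) (t : ℝ) : gR R t ≤ 2 := by
  unfold gR
  rw [div_le_iff₀ (by positivity)]
  nlinarith [sq_nonneg t, sq_nonneg R]

lemma gR_ge_one {R : ℝ} (hR : 0 < R) {t : ℝ} (ht : R < |t|) : 1 ≤ gR R t := by
  unfold gR
  rw [le_div_iff₀ (by positivity)]
  have h2 : R^2 ≤ t^2 := by
    have := sq_le_sq' (by linarith [abs_nonneg t, neg_abs_le t] : -(|t|) ≤ R) ht.le
    nlinarith [sq_abs t, ht.le, abs_nonneg t]
  nlinarith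

lemma integral_im_eq (ρ : Measure ℝ) {f : ℝ → ℂ} (hf : Integrable f ρ) :
    (∫ t, f t ∂ρ).im = ∫ t, (f t).im ∂ρ := by
  rw [show (∫ t, f t ∂ρ).im = Complex.imCLM (∫ t, f t ∂ρ) from rfl,
    ← ContinuousLinearMap.integral_comp_comm _ hf]
  rfl

/-- `∫ gR dρ` in terms of the Cauchy transform at `iR` -/
lemma integral_gR_eq {R : ℝ} (hR : 0 < R) (ρ : Measure ℝ) [IsProbabilityMeasure ρ] :
    (∫ t, gR R t ∂ρ) = 2 + 2 * R * (∫ t, (((R:ℝ) * Complex.I) - (t:ℂ))⁻¹ ∂ρ).im := by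
  have hbd : ∀ t : ℝ, ((t:ℝ)^2 + R^2)⁻¹ ≤ (R^2)⁻¹ := fun t =>
    inv_anti₀ (by positivity) (by nlinarith [sq_nonneg t])
  have hcont : Continuous fun t : ℝ => (t^2 + R^2)⁻¹ :=
    Continuous.inv₀ (by continuity) fun t => by positivity
  have hint1 : Integrable (fun t : ℝ => (t^2 + R^2)⁻¹) ρ :=
    integrable_bdd ρ hcont (C := (R^2)⁻¹) (fun t => by
      rw [Real.norm_eq_abs, abs_of_pos (by positivity)]; exact hbd t)
  have hzim : (0:ℝ) < ((R:ℝ) * Complex.I : ℂ).im := by simp [hR]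
  have hint2 : Integrable (fun t : ℝ => (((R:ℝ) * Complex.I : ℂ) - (t:ℂ))⁻¹) ρ :=
    integrable_bdd ρ (res_cont hzim) (res_norm_le hzim)
  have hptc : ∀ t : ℝ, ((((R:ℝ) * Complex.I : ℂ) - (t:ℂ))⁻¹).im = -(R * (t^2 + R^2)⁻¹) := by
    intro t
    rw [Complex.inv_im]
    have h1 : ((R:ℝ) * Complex.I - (t:ℂ)).im = R := by simp
    have h2 : Complex.normSq ((R:ℝ) * Complex.I - (t:ℂ)) = t^2 + R^2 := by
      rw [Complex.normSq_apply]
      simp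
      ring
    rw [h1, h2]
    field_simp
  have hgr : ∀ t : ℝ, gR R t = 2 - 2*R^2 * (t^2+R^2)⁻¹ := by
    intro t
    unfold gR
    field_simp
    ring
  calc ∫ t, gR R t ∂ρ = ∫ t, (2 - 2*R^2 * (t^2+R^2)⁻¹) ∂ρ :=
        integral_congr_ae (ae_of_all _ hgr)
    _ = (∫ _t, (2:ℝ) ∂ρ) - ∫ t, 2*R^2 * (t^2+R^2)⁻¹ ∂ρ :=
        integral_sub (integrable_const 2) (hint1.const_mul _)
    _ = 2 - 2*R^2 * ∫ t, (t^2+R^2)⁻¹ ∂ρ := by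
        rw [integral_const_mul, integral_const]
        simp
    _ = 2 + 2*R*(∫ t, ((((R:ℝ)*Complex.I : ℂ) - (t:ℂ))⁻¹).im ∂ρ) := by
        rw [integral_congr_ae (ae_of_all ρ hptc), integral_neg, integral_const_mul]
        ring
    _ = 2 + 2 * R * (∫ t, (((R:ℝ) * Complex.I) - (t:ℂ))⁻¹ ∂ρ).im := by
        rw [integral_im_eq ρ hint2]


variable (ρ : Measure ℝ) [IsProbabilityMeasure ρ] {y : ℝ}

lemma prod_int (hy : 0 < y) :
    Integrable (fun p : ℝ × ℝ => Pk y (p.2 - p.1)) (ρ.prod volume) := by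
  have hmeas : AEStronglyMeasurable (fun p : ℝ × ℝ => Pk y (p.2 - p.1)) (ρ.prod volume) :=
    ((Pk_cont hy).comp (continuous_snd.sub continuous_fst)).aestronglyMeasurable
  refine (integrable_prod_iff hmeas).mpr ⟨ae_of_all _ fun t => ?_, ?_⟩
  · exact (integrable_Pk hy).comp_sub_right t
  · refine (integrable_const (1:ℝ)).congr (ae_of_all _ fun t => ?_)
    show (1:ℝ) = ∫ x : ℝ, ‖Pk y (x - t)‖
    have h1 : (∫ x : ℝ, ‖Pk y (x - t)‖) = ∫ x : ℝ, Pk y (x - t) :=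
      integral_congr_ae (ae_of_all _ fun x => by
        show ‖Pk y (x - t)‖ = Pk y (x - t)
        rw [Real.norm_eq_abs, abs_of_nonneg (Pk_nonneg hy _)])
    rw [h1, integral_Pk_shift hy]

lemma pkf_nonneg (hy : 0 < y) (x : ℝ) : 0 ≤ pkf ρ y x :=
  integral_nonneg fun t => Pk_nonneg hy _

lemma pkf_integrable (hy : 0 < y) : Integrable (pkf ρ y) := by
  have := (prod_int ρ hy).integral_prod_right
  exact this

lemma pkf_integral_one (hy : 0 < y) : (∫ x, pkf ρ y x) = 1 := by
  have h1 : (∫ t, (∫ x : ℝ, Pk y (x - t)) ∂ρ) = 1 := by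
    rw [integral_congr_ae (ae_of_all _ fun t => integral_Pk_shift hy t)]
    simp
  calc (∫ x, pkf ρ y x) = ∫ t, (∫ x : ℝ, Pk y (x - t)) ∂ρ :=
        (integral_integral_swap (f := fun t x => Pk y (x - t)) (prod_int ρ hy)).symm
    _ = 1 := h1

lemma pkf_eq_im (hy : 0 < y) (x : ℝ) :
    pkf ρ y x = -(∫ t, (((x:ℂ) + (y:ℝ) * Complex.I) - (t:ℂ))⁻¹ ∂ρ).im / π := by
  have hzim : (0:ℝ) < ((x:ℂ) + (y:ℝ) * Complex.I).im := by simp [hy]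
  have hint : Integrable (fun t : ℝ => (((x:ℂ) + (y:ℝ) * Complex.I) - (t:ℂ))⁻¹) ρ :=
    integrable_bdd ρ (res_cont hzim) (res_norm_le hzim)
  have hpt : ∀ t : ℝ, Pk y (x - t) = -((((x:ℂ) + (y:ℝ) * Complex.I) - (t:ℂ))⁻¹).im / π :=
    fun t => Pk_eq_im hy x t
  rw [integral_im_eq ρ hint]
  unfold pkf
  rw [integral_congr_ae (ae_of_all _ hpt), integral_div, integral_neg, neg_div]

lemma swap_f (hy : 0 < y) (f : BoundedContinuousFunction ℝ ℝ) :
    Integrable (Function.uncurry fun t x => f x * Pk y (x - t)) (ρ.prod volume) ∧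
    Integrable (fun t => ∫ x, f x * Pk y (x - t)) ρ ∧
    Integrable (fun x => f x * pkf ρ y x) ∧
    (∫ x, f x * pkf ρ y x) = ∫ t, (∫ x, f x * Pk y (x - t)) ∂ρ := by
  have hprod : Integrable (Function.uncurry fun t x => f x * Pk y (x - t)) (ρ.prod volume) := by
    refine ((prod_int ρ hy).const_mul ‖f‖).mono'
      ((f.continuous.comp continuous_snd).mul
        ((Pk_cont hy).comp (continuous_snd.sub continuous_fst))).aestronglyMeasurable
      (ae_of_all _ fun p => ?_)
    show ‖f p.2 * Pk y (p.2 - p.1)‖ ≤ ‖f‖ * Pk y (p.2 - p.1)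
    rw [Real.norm_eq_abs, abs_mul]
    refine mul_le_mul (f.norm_coe_le_norm p.2) (le_of_eq (abs_of_nonneg (Pk_nonneg hy _)))
      (abs_nonneg _) (norm_nonneg f)
  refine ⟨hprod, hprod.integral_prod_left, ?_, ?_⟩
  · have h2 := hprod.integral_prod_right
    refine h2.congr (ae_of_all _ fun x => ?_)
    show (∫ t, f x * Pk y (x - t) ∂ρ) = f x * pkf ρ y x
    rw [integral_const_mul]
    rfl
  · calc (∫ x, f x * pkf ρ y x)
        = ∫ x, ∫ t, f x * Pk y (x - t) ∂ρ := by
          refine integral_congr_ae (ae_of_all _ fun x => ?_)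
          show f x * pkf ρ y x = ∫ t, f x * Pk y (x - t) ∂ρ
          rw [integral_const_mul]
          rfl
      _ = ∫ t, (∫ x, f x * Pk y (x - t)) ∂ρ := (integral_integral_swap hprod).symm



lemma integrable_f_pkf (ρ : Measure ℝ) [IsProbabilityMeasure ρ] {y : ℝ} (hy : 0 < y)
    (f : BoundedContinuousFunction ℝ ℝ) : Integrable (fun x => f x * pkf ρ y x) :=
  (swap_f ρ hy f).2.2.1

/-- pointwise smoothing error bound -/
lemma err_pointwise (f : BoundedContinuousFunction ℝ ℝ) {R δ y ε' : ℝ}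
    (hR : 1 ≤ R) (hδ0 : 0 < δ) (hδ1 : δ ≤ 1) (hy : 0 < y) (hε' : 0 ≤ ε')
    (hu : ∀ a b : ℝ, |a| ≤ R+1 → |b| ≤ R+1 → |a - b| ≤ δ → |f a - f b| ≤ ε') (t : ℝ) :
    |f t - ∫ x, f x * Pk y (x - t)| ≤ ε' + 4*‖f‖*y/δ + 2*‖f‖*gR R t := by
  set C := ‖f‖ with hC
  have hC0 : 0 ≤ C := norm_nonneg f
  have hfb : ∀ x : ℝ, |f x| ≤ C := fun x => f.norm_coe_le_norm x
  have hR0 : (0:ℝ) < R := lt_of_lt_of_le one_pos hR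
  have hπ : (0:ℝ) < π := pi_pos
  -- change of variables
  have hφ : (∫ x, f x * Pk y (x - t)) = ∫ u, f (u + t) * Pk y u := by
    have h1 := MeasureTheory.integral_add_right_eq_self (μ := (volume : Measure ℝ))
      (fun x => f x * Pk y (x - t)) t
    simp only [add_sub_cancel_right] at h1
    rw [← h1]
  have I1 : Integrable (fun u => f (u + t) * Pk y u) := by
    refine ((integrable_Pk hy).const_mul C).mono'
      ((f.continuous.comp (continuous_id.add continuous_const)).mul (Pk_cont hy)).aestronglyMeasurable
      (ae_of_all _ fun u => ?_)
    rw [Real.norm_eq_abs, abs_mul, abs_of_nonneg (Pk_nonneg hy u)]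
    exact mul_le_mul_of_nonneg_right (hfb _) (Pk_nonneg hy u)
  have I0 : Integrable (fun u => f t * Pk y u) := (integrable_Pk hy).const_mul _
  have hft : (f t : ℝ) = ∫ u, f t * Pk y u := by
    rw [integral_const_mul, integral_Pk hy, mul_one]
  have hdiff : f t - (∫ u, f (u + t) * Pk y u) = ∫ u, (f t - f (u + t)) * Pk y u := by
    conv_lhs => rw [hft]
    rw [← integral_sub I0 I1]
    exact integral_congr_ae (ae_of_all _ fun u => by ring)
  have hφbd : |∫ u, f (u + t) * Pk y u| ≤ C := by
    have hb : ∀ u : ℝ, ‖f (u + t) * Pk y u‖ ≤ C * Pk y u := fun u => by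
      rw [Real.norm_eq_abs, abs_mul, abs_of_nonneg (Pk_nonneg hy u)]
      exact mul_le_mul_of_nonneg_right (hfb _) (Pk_nonneg hy u)
    have h2 := norm_integral_le_of_norm_le ((integrable_Pk hy).const_mul C)
      (ae_of_all volume hb)
    rw [Real.norm_eq_abs, integral_const_mul, integral_Pk hy, mul_one] at h2
    exact h2
  rcases le_or_gt |t| R with htR | htR
  · -- main case
    have hbound : ∀ u : ℝ, ‖(f t - f (u + t)) * Pk y u‖ ≤
        (ε' + 2*C*min 1 (u^2/δ^2)) * Pk y u := by
      intro u
      rw [Real.norm_eq_abs, abs_mul, abs_of_nonneg (Pk_nonneg hy u)]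
      refine mul_le_mul_of_nonneg_right ?_ (Pk_nonneg hy u)
      by_cases hu1 : |u| ≤ δ
      · have ha : |t| ≤ R+1 := by linarith
        have hb : |u + t| ≤ R+1 := by
          calc |u + t| ≤ |u| + |t| := abs_add_le u t
            _ ≤ R + 1 := by linarith
        have hab : |t - (u + t)| ≤ δ := by
          have : t - (u + t) = -u := by ring
          rw [this, abs_neg]
          exact hu1
        have := hu t (u+t) ha hb hab
        have hmin : 0 ≤ min 1 (u^2/δ^2) := le_min one_pos.le (by positivity)
        nlinarith
      · push_neg at hu1
        have hmin : min 1 (u^2/δ^2) = 1 := by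
          refine min_eq_left ?_
          rw [le_div_iff₀ (by positivity)]
          nlinarith [abs_nonneg u, sq_abs u, sq_abs δ, abs_of_pos hδ0]
        rw [hmin]
        calc |f t - f (u + t)| ≤ |f t| + |f (u + t)| := abs_sub _ _
          _ ≤ C + C := add_le_add (hfb _) (hfb _)
          _ ≤ ε' + 2*C*1 := by linarith
    have hInt2 : Integrable (fun u : ℝ => (ε' + 2*C*min 1 (u^2/δ^2)) * Pk y u) := by
      refine ((integrable_Pk hy).const_mul (ε' + 2*C)).mono'
        (((continuous_const.add (continuous_const.mul
          (continuous_const.min ((continuous_pow 2).div_const _)))).mul (Pk_cont hy)).aestronglyMeasurable)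
        (ae_of_all _ fun u => ?_)
      rw [Real.norm_eq_abs, abs_mul]
      have hmin0 : 0 ≤ min 1 (u^2/δ^2) := le_min one_pos.le (by positivity)
      have hmin1 : min 1 (u^2/δ^2) ≤ 1 := min_le_left _ _
      rw [abs_of_nonneg (by positivity : (0:ℝ) ≤ ε' + 2*C*min 1 (u^2/δ^2)),
        abs_of_nonneg (Pk_nonneg hy u)]
      refine mul_le_mul_of_nonneg_right (by nlinarith) (Pk_nonneg hy u)
    have hstep : |∫ u, (f t - f (u + t)) * Pk y u| ≤
        ∫ u, (ε' + 2*C*min 1 (u^2/δ^2)) * Pk y u := by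
      have := norm_integral_le_of_norm_le hInt2 (ae_of_all volume hbound)
      rwa [Real.norm_eq_abs] at this
    have hminPk : ∀ u : ℝ, min 1 (u^2/δ^2) * Pk y u ≤ 2*(y/π) * (u^2+δ^2)⁻¹ := by
      intro u
      have hmin : min 1 (u^2/δ^2) ≤ 2*u^2/(u^2+δ^2) := by
        rcases le_total (u^2) (δ^2) with h | h
        · refine (min_le_right _ _).trans ?_
          rw [div_le_div_iff₀ (by positivity) (by positivity)]
          nlinarith [sq_nonneg u]
        · refine (min_le_left _ _).trans ?_
          rw [le_div_iff₀ (by positivity)]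
          nlinarith
      have h1 : min 1 (u^2/δ^2) * Pk y u ≤ (2*u^2/(u^2+δ^2)) * Pk y u :=
        mul_le_mul_of_nonneg_right hmin (Pk_nonneg hy u)
      refine h1.trans ?_
      unfold Pk
      have h2 : (2*u^2/(u^2+δ^2)) * ((y/π) * (u^2+y^2)⁻¹) =
          (2*(y/π) * (u^2+δ^2)⁻¹) * (u^2 * (u^2+y^2)⁻¹) := by
        field_simp
      rw [h2]
      refine mul_le_of_le_one_right (by positivity) ?_
      rw [← div_eq_mul_inv, div_le_one (by positivity)]
      nlinarith [sq_nonneg y]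
    have hImin : Integrable (fun u : ℝ => min 1 (u^2/δ^2) * Pk y u) := by
      refine (integrable_Pk hy).mono'
        ((continuous_const.min ((continuous_pow 2).div_const _)).mul (Pk_cont hy)).aestronglyMeasurable
        (ae_of_all _ fun u => ?_)
      rw [Real.norm_eq_abs, abs_mul]
      have hmin0 : 0 ≤ min 1 (u^2/δ^2) := le_min one_pos.le (by positivity)
      rw [abs_of_nonneg hmin0, abs_of_nonneg (Pk_nonneg hy u)]
      exact mul_le_of_le_one_left (Pk_nonneg hy u) (min_le_left _ _)
    have hint3 : (∫ u : ℝ, min 1 (u^2/δ^2) * Pk y u) ≤ 2*y/δ := by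
      calc (∫ u : ℝ, min 1 (u^2/δ^2) * Pk y u)
          ≤ ∫ u : ℝ, 2*(y/π) * (u^2+δ^2)⁻¹ :=
            integral_mono hImin ((integrable_inv_sq_add hδ0).const_mul _) hminPk
        _ = 2*(y/π) * (π/δ) := by rw [integral_const_mul, integral_inv_sq_add hδ0]
        _ = 2*y/δ := by field_simp
    have hsum : (∫ u, (ε' + 2*C*min 1 (u^2/δ^2)) * Pk y u) ≤ ε' + 4*C*y/δ := by
      have hsplit : (∫ u, (ε' + 2*C*min 1 (u^2/δ^2)) * Pk y u) =
          ε' * (∫ u, Pk y u) + 2*C * ∫ u, min 1 (u^2/δ^2) * Pk y u := by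
        calc (∫ u, (ε' + 2*C*min 1 (u^2/δ^2)) * Pk y u)
            = ∫ u, (ε' * Pk y u + 2*C*(min 1 (u^2/δ^2) * Pk y u)) :=
              integral_congr_ae (ae_of_all _ fun u => by ring)
          _ = (∫ u, ε' * Pk y u) + ∫ u, 2*C*(min 1 (u^2/δ^2) * Pk y u) :=
              integral_add ((integrable_Pk hy).const_mul ε') (hImin.const_mul (2*C))
          _ = ε' * (∫ u, Pk y u) + 2*C * ∫ u, min 1 (u^2/δ^2) * Pk y u := by
              rw [integral_const_mul, integral_const_mul]
      rw [hsplit, integral_Pk hy, mul_one]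
      have h5 := mul_le_mul_of_nonneg_left hint3 (by positivity : (0:ℝ) ≤ 2*C)
      calc ε' + 2*C * ∫ u, min 1 (u^2/δ^2) * Pk y u ≤ ε' + 2*C*(2*y/δ) := by linarith
        _ = ε' + 4*C*y/δ := by ring
    have hfinal : |f t - ∫ x, f x * Pk y (x - t)| ≤ ε' + 4*C*y/δ := by
      rw [hφ, hdiff]
      exact hstep.trans hsum
    have hg := gR_nonneg hR0 t
    have hg2 : 0 ≤ 2*C*gR R t := mul_nonneg (by positivity) hg
    calc |f t - ∫ x, f x * Pk y (x - t)| ≤ ε' + 4*C*y/δ := hfinal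
      _ ≤ ε' + 4*C*y/δ + 2*C*gR R t := by linarith
  · -- tail case
    have h2C : |f t - ∫ x, f x * Pk y (x - t)| ≤ 2*C := by
      rw [hφ]
      calc |f t - ∫ u, f (u + t) * Pk y u| ≤ |f t| + |∫ u, f (u + t) * Pk y u| := abs_sub _ _
        _ ≤ C + C := add_le_add (hfb t) hφbd
        _ = 2*C := by ring
    have hg1 := gR_ge_one hR0 htR
    have hyδ : 0 ≤ 4*C*y/δ := by positivity
    have hg2 : 2*C ≤ 2*C*gR R t := le_mul_of_one_le_right (by positivity) hg1
    calc |f t - ∫ x, f x * Pk y (x - t)| ≤ 2*C := h2C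
      _ ≤ ε' + 4*C*y/δ + 2*C*gR R t := by linarith

variable {μ : ℕ → Measure ℝ} {ν : Measure ℝ}

/-- Scheffé-type convergence of the smoothed integrals -/
lemma scheffe (hμ : ∀ n, IsProbabilityMeasure (μ n)) (hν : IsProbabilityMeasure ν)
    {y : ℝ} (hy : 0 < y)
    (hconv : ∀ x : ℝ, Tendsto (fun n => pkf (μ n) y x) atTop (𝓝 (pkf ν y x)))
    (f : BoundedContinuousFunction ℝ ℝ) :
    Tendsto (fun n => ∫ x, f x * pkf (μ n) y x) atTop (𝓝 (∫ x, f x * pkf ν y x)) := by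
  haveI := hν
  set C := ‖f‖ with hC
  have hC0 : 0 ≤ C := norm_nonneg f
  have hfb : ∀ x : ℝ, |f x| ≤ C := fun x => f.norm_coe_le_norm x
  set q : ℕ → ℝ → ℝ := fun n x => pkf ν y x - pkf (μ n) y x with hq
  set e : ℕ → ℝ → ℝ := fun n x => max (q n x) 0 with he
  have hqint : ∀ n, Integrable (q n) := fun n => by
    haveI := hμ n
    exact (pkf_integrable ν hy).sub (pkf_integrable (μ n) hy)
  have heint : ∀ n, Integrable (e n) := fun n => (hqint n).pos_part
  have hDCT : Tendsto (fun n => ∫ x, e n x) atTop (𝓝 0) := by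
    have h0 : (0:ℝ) = ∫ _x : ℝ, (0:ℝ) := by simp
    rw [h0]
    refine tendsto_integral_of_dominated_convergence (pkf ν y)
      (fun n => (heint n).aestronglyMeasurable) (pkf_integrable ν hy)
      (fun n => ae_of_all _ fun x => ?_) (ae_of_all _ fun x => ?_)
    · haveI := hμ n
      rw [Real.norm_eq_abs, abs_of_nonneg (le_max_right _ _)]
      refine max_le ?_ (pkf_nonneg ν hy x)
      have := pkf_nonneg (μ n) hy x
      simp only [hq]
      linarith
    · have h1 : Tendsto (fun n => q n x) atTop (𝓝 0) := by
        have := (tendsto_const_nhds (x := pkf ν y x)).sub (hconv x)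
        simpa using this
      have h2 := h1.max (tendsto_const_nhds (x := (0:ℝ)))
      simpa using h2
  have hq0 : ∀ n, (∫ x, q n x) = 0 := by
    intro n
    haveI := hμ n
    rw [integral_sub (pkf_integrable ν hy) (pkf_integrable (μ n) hy),
      pkf_integral_one ν hy, pkf_integral_one (μ n) hy]
    ring
  have habs : ∀ n, (∫ x, |q n x|) = 2 * ∫ x, e n x := by
    intro n
    have hpt : ∀ x, |q n x| = 2 * e n x - q n x := by
      intro x
      rcases le_total (q n x) 0 with h | h
      · rw [abs_of_nonpos h]
        simp only [he]
        rw [max_eq_right h]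
        ring
      · rw [abs_of_nonneg h]
        simp only [he]
        rw [max_eq_left h]
        ring
    rw [integral_congr_ae (ae_of_all _ hpt), integral_sub ((heint n).const_mul 2) (hqint n),
      integral_const_mul, hq0 n]
    ring
  have hbnd : ∀ n, |(∫ x, f x * pkf (μ n) y x) - ∫ x, f x * pkf ν y x| ≤ 2*C * ∫ x, e n x := by
    intro n
    haveI := hμ n
    have h1 : (∫ x, f x * pkf (μ n) y x) - (∫ x, f x * pkf ν y x) = ∫ x, f x * (-(q n x)) := by
      rw [← integral_sub (integrable_f_pkf (μ n) hy f) (integrable_f_pkf ν hy f)]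
      refine integral_congr_ae (ae_of_all _ fun x => ?_)
      simp only [hq]
      ring
    rw [h1]
    have h2 : Integrable (fun x => C * |q n x|) := ((hqint n).abs.const_mul C)
    have hb : ∀ x : ℝ, ‖f x * (-(q n x))‖ ≤ C * |q n x| := fun x => by
      rw [Real.norm_eq_abs, abs_mul, abs_neg]
      exact mul_le_mul_of_nonneg_right (hfb x) (abs_nonneg _)
    have h3 := norm_integral_le_of_norm_le h2 (ae_of_all volume hb)
    rw [Real.norm_eq_abs] at h3
    refine h3.trans ?_
    rw [integral_const_mul, habs n]
    ring_nf
    exact le_refl _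
  rw [tendsto_iff_norm_sub_tendsto_zero]
  refine squeeze_zero (g := fun n => 2*C * ∫ x, e n x) (fun n => norm_nonneg _) (fun n => ?_) ?_
  · show ‖(∫ x, f x * pkf (μ n) y x) - ∫ x, f x * pkf ν y x‖ ≤ 2*C * ∫ x, e n x
    rw [Real.norm_eq_abs]
    exact hbnd n
  · have h9 := (tendsto_const_nhds (x := 2*C) (f := (atTop : Filter ℕ))).mul hDCT
    simpa using h9

lemma integral_re_eq (ρ : Measure ℝ) {f : ℝ → ℂ} (hf : Integrable f ρ) :
    (∫ t, f t ∂ρ).re = ∫ t, (f t).re ∂ρ := by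
  rw [show (∫ t, f t ∂ρ).re = Complex.reCLM (∫ t, f t ∂ρ) from rfl,
    ← ContinuousLinearMap.integral_comp_comm _ hf]
  rfl

/-- total error bound between `∫ f dρ` and the Poisson-smoothed integral -/
lemma errB (ρ : Measure ℝ) [IsProbabilityMeasure ρ] (f : BoundedContinuousFunction ℝ ℝ)
    {R δ y ε' : ℝ} (hR : 1 ≤ R) (hδ0 : 0 < δ) (hδ1 : δ ≤ 1) (hy : 0 < y) (hε' : 0 ≤ ε')
    (hu : ∀ a b : ℝ, |a| ≤ R+1 → |b| ≤ R+1 → |a - b| ≤ δ → |f a - f b| ≤ ε') :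
    |(∫ t, f t ∂ρ) - ∫ x, f x * pkf ρ y x| ≤
      ε' + 4*‖f‖*y/δ + 2*‖f‖*(∫ t, gR R t ∂ρ) := by
  have hR0 : (0:ℝ) < R := lt_of_lt_of_le one_pos hR
  obtain ⟨hprod, hφint, hfpk, hswap⟩ := swap_f ρ hy f
  rw [hswap]
  have hfint : Integrable (fun t => (f t : ℝ)) ρ :=
    integrable_bdd ρ f.continuous f.norm_coe_le_norm
  rw [← integral_sub hfint hφint]
  have hgint : Integrable (gR R) ρ := by
    refine integrable_bdd ρ (gR_cont hR0) (C := 2) fun t => ?_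
    rw [Real.norm_eq_abs, abs_of_nonneg (gR_nonneg hR0 t)]
    exact gR_le_two hR0 t
  have hRHSint : Integrable (fun t => ε' + 4*‖f‖*y/δ + 2*‖f‖*gR R t) ρ :=
    (integrable_const _).add (hgint.const_mul _)
  have h3 := norm_integral_le_of_norm_le hRHSint (ae_of_all ρ (fun t => by
    rw [Real.norm_eq_abs]
    exact err_pointwise f hR hδ0 hδ1 hy hε' hu t))
  rw [Real.norm_eq_abs] at h3
  refine h3.trans (le_of_eq ?_)
  rw [integral_add (integrable_const _) (hgint.const_mul _), integral_const,
    integral_const_mul]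
  simp

end WCCT

/-- Weak convergence of probability measures on `ℝ` is equivalent to pointwise
convergence of the Cauchy transforms on `{z : Im z ≥ 1}`. -/
theorem weak_convergence_iff_cauchy_transform
    (μ : ℕ → Measure ℝ) (ν : Measure ℝ)
    (hμ : ∀ n, IsProbabilityMeasure (μ n)) (hν : IsProbabilityMeasure ν) :
    (∀ f : BoundedContinuousFunction ℝ ℝ,
        Tendsto (fun n => ∫ x, f x ∂(μ n)) atTop (𝓝 (∫ x, f x ∂ν))) ↔
    (∀ z : ℂ, 1 ≤ z.im → Tendsto (fun n => cauchyT (μ n) z) atTop (𝓝 (cauchyT ν z))) := by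
  haveI := hν
  constructor
  · -- forward direction
    intro hw z hz
    have hz0 : 0 < z.im := lt_of_lt_of_le one_pos hz
    set fre : BoundedContinuousFunction ℝ ℝ :=
      BoundedContinuousFunction.ofNormedAddCommGroup (fun x : ℝ => ((z - (x:ℂ))⁻¹).re)
        (Complex.continuous_re.comp (WCCT.res_cont hz0)) 1
        (fun x => by
          rw [Real.norm_eq_abs]
          exact (Complex.abs_re_le_norm _).trans (WCCT.res_norm_le_one hz x)) with hfre
    set fim : BoundedContinuousFunction ℝ ℝ :=
      BoundedContinuousFunction.ofNormedAddCommGroup (fun x : ℝ => ((z - (x:ℂ))⁻¹).im)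
        (Complex.continuous_im.comp (WCCT.res_cont hz0)) 1
        (fun x => by
          rw [Real.norm_eq_abs]
          exact (Complex.abs_im_le_norm _).trans (WCCT.res_norm_le_one hz x)) with hfim
    have hre := hw fre
    have him := hw fim
    have key : ∀ ρ : Measure ℝ, IsProbabilityMeasure ρ →
        cauchyT ρ z = ((∫ x, fre x ∂ρ : ℝ) : ℂ) + ((∫ x, fim x ∂ρ : ℝ) : ℂ) * Complex.I := by
      intro ρ hρ
      haveI := hρ
      have hint : Integrable (fun t : ℝ => (z - (t:ℂ))⁻¹) ρ :=
        WCCT.integrable_bdd ρ (WCCT.res_cont hz0) (WCCT.res_norm_le_one hz)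
      have h1 : (∫ x, fre x ∂ρ) = (∫ t, (z - (t:ℂ))⁻¹ ∂ρ).re := by
        rw [WCCT.integral_re_eq ρ hint]
        refine integral_congr_ae (ae_of_all _ fun x => ?_)
        simp [hfre]
      have h2 : (∫ x, fim x ∂ρ) = (∫ t, (z - (t:ℂ))⁻¹ ∂ρ).im := by
        rw [WCCT.integral_im_eq ρ hint]
        refine integral_congr_ae (ae_of_all _ fun x => ?_)
        simp [hfim]
      rw [h1, h2, Complex.re_add_im]
      rfl
    have hT := (((Complex.continuous_ofReal.tendsto _).comp hre).add
      (((Complex.continuous_ofReal.tendsto _).comp him).mul_const Complex.I))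
    have hT2 := hT.congr (fun n => (key (μ n) (hμ n)).symm)
    rwa [← key ν hν] at hT2
  · -- reverse direction
    intro hcau f
    set C := ‖f‖ with hC
    have hC0 : (0:ℝ) ≤ C := norm_nonneg f
    have H : ∀ z : ℂ, 1 ≤ z.im → Tendsto (fun n => ∫ t, (z - (t:ℂ))⁻¹ ∂(μ n)) atTop
        (𝓝 (∫ t, (z - (t:ℂ))⁻¹ ∂ν)) := fun z hz => hcau z hz
    rw [Metric.tendsto_atTop]
    intro ε hε
    have hη : (0:ℝ) < ε/(8*(2*C+1)) := by positivity
    -- tightness: find R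
    obtain ⟨R, hR1, hνR, htR⟩ : ∃ R : ℝ, 1 ≤ R ∧ (∫ t, WCCT.gR R t ∂ν) < ε/(8*(2*C+1)) ∧
        Tendsto (fun n => ∫ t, WCCT.gR R t ∂(μ n)) atTop (𝓝 (∫ t, WCCT.gR R t ∂ν)) := by
      have hpt : ∀ t : ℝ, Tendsto (fun m : ℕ => WCCT.gR ((m:ℝ)+1) t) atTop (𝓝 0) := by
        intro t
        have hb : ∀ m : ℕ, WCCT.gR ((m:ℝ)+1) t ≤ 2*t^2 * (((m:ℝ)+1)^2)⁻¹ := by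
          intro m
          unfold WCCT.gR
          rw [← div_eq_mul_inv]
          exact div_le_div_of_nonneg_left (by positivity) (by positivity)
            (by nlinarith [sq_nonneg t])
        have hlim : Tendsto (fun m : ℕ => 2*t^2 * (((m:ℝ)+1)^2)⁻¹) atTop (𝓝 0) := by
          have h1 : Tendsto (fun m : ℕ => (((m:ℝ)+1)^2)) atTop atTop :=
            (tendsto_pow_atTop (two_ne_zero)).comp
              (tendsto_atTop_add_const_right _ 1 tendsto_natCast_atTop_atTop)
          have h2 := (tendsto_inv_atTop_zero.comp h1).const_mul (2*t^2)
          simpa using h2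
        exact squeeze_zero (fun m => WCCT.gR_nonneg (by positivity) t) hb hlim
      have hto0 : Tendsto (fun m : ℕ => ∫ t, WCCT.gR ((m:ℝ)+1) t ∂ν) atTop (𝓝 0) := by
        have h0 : (0:ℝ) = ∫ _t : ℝ, (0:ℝ) ∂ν := by simp
        rw [h0]
        refine tendsto_integral_of_dominated_convergence (fun _ => (2:ℝ))
          (fun m => (WCCT.gR_cont (by positivity)).aestronglyMeasurable)
          (integrable_const 2) (fun m => ae_of_all _ fun t => ?_) (ae_of_all _ hpt)
        rw [Real.norm_eq_abs, abs_of_nonneg (WCCT.gR_nonneg (by positivity) t)]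
        exact WCCT.gR_le_two (by positivity) t
      obtain ⟨m, hm⟩ := (hto0.eventually_lt_const hη).exists
      have hR0 : (0:ℝ) < (m:ℝ)+1 := by positivity
      refine ⟨(m:ℝ)+1, by simp [Nat.cast_nonneg], hm, ?_⟩
      have hzim : (1:ℝ) ≤ ((((m:ℝ)+1 : ℝ) : ℂ) * Complex.I).im := by
        simp [Nat.cast_nonneg]
      have h1 := H ((((m:ℝ)+1 : ℝ) : ℂ) * Complex.I) hzim
      have h4 : Tendsto (fun n => 2 + 2*((m:ℝ)+1) *
          (∫ t, (((((m:ℝ)+1 : ℝ) : ℂ) * Complex.I) - (t:ℂ))⁻¹ ∂(μ n)).im) atTop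
          (𝓝 (2 + 2*((m:ℝ)+1) *
            (∫ t, (((((m:ℝ)+1 : ℝ) : ℂ) * Complex.I) - (t:ℂ))⁻¹ ∂ν).im)) :=
        tendsto_const_nhds.add (((Complex.continuous_im.tendsto _).comp h1).const_mul _)
      have e1 : ∀ (ρ : Measure ℝ), IsProbabilityMeasure ρ →
          (∫ t, WCCT.gR ((m:ℝ)+1) t ∂ρ) = 2 + 2*((m:ℝ)+1) *
            (∫ t, (((((m:ℝ)+1 : ℝ) : ℂ) * Complex.I) - (t:ℂ))⁻¹ ∂ρ).im := by
        intro ρ hρ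
        haveI := hρ
        exact WCCT.integral_gR_eq hR0 ρ
      rw [e1 ν hν]
      exact h4.congr (fun n => (e1 (μ n) (hμ n)).symm)
    have hR0 : (0:ℝ) < R := lt_of_lt_of_le one_pos hR1
    -- uniform continuity
    obtain ⟨δ0, hδ0pos, hδ0⟩ := Metric.uniformContinuousOn_iff.mp
      ((isCompact_Icc (a := -(R+1)) (b := R+1)).uniformContinuousOn_of_continuous
        f.continuous.continuousOn) (ε/8) (by positivity)
    set δ : ℝ := min (δ0/2) 1 with hδ
    have hδpos : 0 < δ := lt_min (by positivity) one_pos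
    have hδ1 : δ ≤ 1 := min_le_right _ _
    have hu : ∀ a b : ℝ, |a| ≤ R+1 → |b| ≤ R+1 → |a-b| ≤ δ → |f a - f b| ≤ ε/8 := by
      intro a b ha hb hab
      have hma : a ∈ Set.Icc (-(R+1)) (R+1) := by
        rw [Set.mem_Icc]
        constructor <;> [linarith [neg_abs_le a]; linarith [le_abs_self a]]
      have hmb : b ∈ Set.Icc (-(R+1)) (R+1) := by
        rw [Set.mem_Icc]
        constructor <;> [linarith [neg_abs_le b]; linarith [le_abs_self b]]
      have hd : dist a b < δ0 := by
        rw [Real.dist_eq]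
        calc |a - b| ≤ δ := hab
          _ ≤ δ0/2 := min_le_left _ _
          _ < δ0 := by linarith
      have := hδ0 a hma b hmb hd
      rw [Real.dist_eq] at this
      exact this.le
    -- smoothing scale
    set y : ℝ := min (ε*δ/(32*C+8)) 1 with hy
    have hy0 : 0 < y := lt_min (by positivity) one_pos
    -- pointwise convergence of smoothed densities
    have hpk : ∀ x : ℝ, Tendsto (fun n => WCCT.pkf (μ n) y x) atTop
        (𝓝 (WCCT.pkf ν y x)) := by
      intro x
      have hzim : (0:ℝ) < ((x:ℂ) + (y:ℝ) * Complex.I).im := by simp [hy0]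
      have h1 := WCCT.P3 hμ hν H ((x:ℂ) + (y:ℝ) * Complex.I) hzim
      have h2 := Tendsto.div_const (((Complex.continuous_im.tendsto _).comp h1).neg) Real.pi
      rw [WCCT.pkf_eq_im ν hy0 x]
      refine h2.congr fun n => ?_
      haveI := hμ n
      rw [WCCT.pkf_eq_im (μ n) hy0 x]
      simp [Function.comp, neg_div]
    have hB := WCCT.scheffe hμ hν hy0 hpk f
    -- eventualities
    have hev1 : ∀ᶠ n in atTop, (∫ t, WCCT.gR R t ∂(μ n)) < ε/(8*(2*C+1)) :=
      htR.eventually_lt_const hνR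
    have hev2 : ∀ᶠ n in atTop,
        dist (∫ x, f x * WCCT.pkf (μ n) y x) (∫ x, f x * WCCT.pkf ν y x) < ε/8 :=
      (Metric.tendsto_nhds.mp hB) (ε/8) (by positivity)
    obtain ⟨N, hN⟩ := eventually_atTop.mp (hev1.and hev2)
    refine ⟨N, fun n hn => ?_⟩
    obtain ⟨h1n, h2n⟩ := hN n hn
    haveI := hμ n
    -- error bounds
    have herrn := WCCT.errB (μ n) f hR1 hδpos hδ1 hy0 (by positivity : (0:ℝ) ≤ ε/8) hu
    have herrν := WCCT.errB ν f hR1 hδpos hδ1 hy0 (by positivity : (0:ℝ) ≤ ε/8) hu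
    -- numeric bounds
    have hyb : 4*C*y/δ ≤ ε/8 := by
      have h1 : y ≤ ε*δ/(32*C+8) := min_le_left _ _
      have h2 : 4*C*y/δ ≤ 4*C*(ε*δ/(32*C+8))/δ := by gcongr
      have h3 : 4*C*(ε*δ/(32*C+8))/δ = (4*C*ε)/(32*C+8) := by
        field_simp
      have h4 : (4*C*ε)/(32*C+8) ≤ ε/8 := by
        rw [div_le_div_iff₀ (by positivity) (by norm_num)]
        nlinarith [hε.le, hC0]
      linarith
    have hgν : 2*C*(∫ t, WCCT.gR R t ∂ν) ≤ ε/8 := by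
      have h1 : 2*C*(∫ t, WCCT.gR R t ∂ν) ≤ 2*C*(ε/(8*(2*C+1))) :=
        mul_le_mul_of_nonneg_left hνR.le (by positivity)
      have h2 : 2*C*(ε/(8*(2*C+1))) ≤ ε/8 := by
        rw [mul_div_assoc', div_le_div_iff₀ (by positivity) (by norm_num)]
        nlinarith [hε.le, hC0]
      linarith
    have hgn : 2*C*(∫ t, WCCT.gR R t ∂(μ n)) ≤ ε/8 := by
      have h1 : 2*C*(∫ t, WCCT.gR R t ∂(μ n)) ≤ 2*C*(ε/(8*(2*C+1))) :=
        mul_le_mul_of_nonneg_left h1n.le (by positivity)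
      have h2 : 2*C*(ε/(8*(2*C+1))) ≤ ε/8 := by
        rw [mul_div_assoc', div_le_div_iff₀ (by positivity) (by norm_num)]
        nlinarith [hε.le, hC0]
      linarith
    rw [Real.dist_eq] at h2n ⊢
    have htri : |(∫ x, f x ∂(μ n)) - ∫ x, f x ∂ν| ≤
        |(∫ x, f x ∂(μ n)) - ∫ x, f x * WCCT.pkf (μ n) y x| +
        |(∫ x, f x * WCCT.pkf (μ n) y x) - ∫ x, f x * WCCT.pkf ν y x| +
        |(∫ x, f x * WCCT.pkf ν y x) - ∫ x, f x ∂ν| := by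
      have := abs_sub_le (∫ x, f x ∂(μ n)) (∫ x, f x * WCCT.pkf (μ n) y x)
        (∫ x, f x ∂ν)
      have h5 := abs_sub_le (∫ x, f x * WCCT.pkf (μ n) y x)
        (∫ x, f x * WCCT.pkf ν y x) (∫ x, f x ∂ν)
      linarith
    have herrν' : |(∫ x, f x * WCCT.pkf ν y x) - ∫ x, f x ∂ν| ≤
        ε/8 + 4*C*y/δ + 2*C*(∫ t, WCCT.gR R t ∂ν) := by
      rw [abs_sub_comm]
      exact herrν
    calc |(∫ x, f x ∂(μ n)) - ∫ x, f x ∂ν|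
        ≤ (ε/8 + 4*C*y/δ + 2*C*(∫ t, WCCT.gR R t ∂(μ n))) + (ε/8) +
          (ε/8 + 4*C*y/δ + 2*C*(∫ t, WCCT.gR R t ∂ν)) := by
          have := htri
          linarith [herrn, h2n.le, herrν']
      _ ≤ ε/8 + ε/8 + ε/8 + ε/8 + ε/8 + ε/8 + ε/8 := by linarith
      _ < ε := by linarith

end
end

section
/- Let G = (V,E,e) be a connected finite simple rooted graph and k ≥ 1 such that V_e^{[k]}, the set of vertices of G at graph distance exactly k from e, is nonempty. Then for every N ≥ 1, the number of neighbors of the root e in the distance k-graph (G^{⋆N})^{[k]} of the N-fold star power equals N·|V_e^{[k]}|. Equivalently, the (e,e)-entry of (A^{[⋆N,k]})² equals N·|V_e^{[k]}|, where A^{[⋆N,k]} is the adjacency matrix of (G^{⋆N})^{[k]}. -/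
open MeasureTheory Filter
open scoped ENNReal Topology

noncomputable section

section StarAux

variable {V : Type*} [DecidableEq V] (G : SimpleGraph V) (e : V) (N : ℕ)

/-- The `i`-th copy embedding is a graph homomorphism. -/
def copyHom (i : Fin N) : G →g starPower G e N where
  toFun := rootedEmbed e N i
  map_rel' := by
    intro a b hab
    unfold rootedEmbed
    split_ifs with ha hb hb
    · rw [ha, hb] at hab; exact absurd hab (G.loopless.irrefl e)
    · rw [ha] at hab
      show starAdj G e N none (some (i, ⟨b, hb⟩))
      exact hab
    · rw [hb] at hab
      show starAdj G e N (some (i, ⟨a, ha⟩)) none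
      exact hab
    · exact ⟨rfl, hab⟩

/-- Projection onto the `i`-th copy. -/
def starProj (i : Fin N) : StarVert V e N → V
  | none => e
  | some p => if p.1 = i then p.2.1 else e

lemma starProj_adj_or_eq (i : Fin N) {x y : StarVert V e N}
    (h : (starPower G e N).Adj x y) :
    starProj e N i x = starProj e N i y ∨ G.Adj (starProj e N i x) (starProj e N i y) := by
  match x, y with
  | none, none => exact h.elim
  | none, some q =>
    by_cases hq : q.1 = i
    · right; simp only [starProj, hq, if_pos rfl]; exact h
    · left; simp [starProj, hq]
  | some p, none =>
    by_cases hp : p.1 = i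
    · right; simp only [starProj, hp, if_pos rfl]; exact h
    · left; simp [starProj, hp]
  | some p, some q =>
    obtain ⟨h1, h2⟩ := h
    by_cases hp : p.1 = i
    · right; simp only [starProj, hp, h1 ▸ hp, if_pos rfl]; exact h2
    · left; simp [starProj, hp, h1 ▸ hp]

lemma starProj_walk (i : Fin N) {x y : StarVert V e N} (p : (starPower G e N).Walk x y) :
    ∃ q : G.Walk (starProj e N i x) (starProj e N i y), q.length ≤ p.length := by
  induction p with
  | nil => exact ⟨.nil, le_rfl⟩
  | @cons a b c h p ih =>
    obtain ⟨q, hq⟩ := ih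
    rcases starProj_adj_or_eq G e N i h with heq | hadj
    · exact ⟨q.copy heq.symm rfl, by
        rw [SimpleGraph.Walk.length_copy, SimpleGraph.Walk.length_cons]
        exact hq.trans (Nat.le_succ _)⟩
    · exact ⟨q.cons hadj, by
        rw [SimpleGraph.Walk.length_cons, SimpleGraph.Walk.length_cons]
        exact Nat.succ_le_succ hq⟩

lemma star_reachable (hconn : G.Connected) (i : Fin N) (v : V) (hv : v ≠ e) :
    (starPower G e N).Reachable none (some (i, ⟨v, hv⟩)) := by
  obtain ⟨w⟩ := hconn e v
  refine ⟨((w.map (copyHom G e N i)).copy ?_ ?_)⟩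
  · show rootedEmbed e N i e = none
    simp [rootedEmbed]
  · show rootedEmbed e N i v = some (i, ⟨v, hv⟩)
    simp [rootedEmbed, hv]

lemma star_dist (hconn : G.Connected) (i : Fin N) (v : V) (hv : v ≠ e) :
    (starPower G e N).dist none (some (i, ⟨v, hv⟩)) = G.dist e v := by
  apply le_antisymm
  · obtain ⟨w, hw⟩ := (hconn e v).exists_walk_length_eq_dist
    calc (starPower G e N).dist none (some (i, ⟨v, hv⟩))
        ≤ ((w.map (copyHom G e N i)).copy
            (by show rootedEmbed e N i e = none; simp [rootedEmbed])
            (by show rootedEmbed e N i v = some (i, ⟨v, hv⟩); simp [rootedEmbed, hv])).length :=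
          SimpleGraph.dist_le _
      _ = w.length := by rw [SimpleGraph.Walk.length_copy, SimpleGraph.Walk.length_map]
      _ = G.dist e v := hw
  · obtain ⟨p, hp⟩ := (star_reachable G e N hconn i v hv).exists_walk_length_eq_dist
    obtain ⟨q, hq⟩ := starProj_walk G e N i p
    have hstart : starProj e N i (none : StarVert V e N) = e := rfl
    have hend : starProj e N i (some (i, ⟨v, hv⟩) : StarVert V e N) = v := by
      simp [starProj]
    calc G.dist e v ≤ q.length := by
          rw [show G.dist e v = G.dist (starProj e N i (none : StarVert V e N))
              (starProj e N i (some (i, ⟨v, hv⟩))) by rw [hstart, hend]]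
          exact SimpleGraph.dist_le q
      _ ≤ p.length := hq
      _ = _ := hp

end StarAux

/-- The root of the `N`-fold star power has exactly `N·|V_e^{[k]}|` neighbours
in the distance `k`-graph; equivalently the `(e,e)` entry of the square of its adjacency
matrix equals `N·|V_e^{[k]}|`. -/
theorem star_power_root_degree
    {V : Type*} [Fintype V] [DecidableEq V] (G : SimpleGraph V) (e : V)
    (hconn : G.Connected) (k : ℕ) (hk : 1 ≤ k)
    (σ : ℕ) (hσ : σ = Nat.card {v : V | G.dist e v = k}) (hσpos : 1 ≤ σ)
    (N : ℕ) (hN : 1 ≤ N) :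
    Nat.card {w : StarVert V e N | (distGraph (starPower G e N) k).Adj none w} = N * σ ∧
    ((adjMat (distGraph (starPower G e N) k)) ^ 2) none none = (N * σ : ℝ) := by
  classical
  set H := distGraph (starPower G e N) k with hH
  -- characterize neighbours of the root
  have hne : ∀ v : V, G.dist e v = k → v ≠ e := by
    rintro v hv rfl
    rw [SimpleGraph.dist_self] at hv
    omega
  have hadj : ∀ w : StarVert V e N, H.Adj none w ↔
      ∃ (i : Fin N) (v : V) (hv : v ≠ e), w = some (i, ⟨v, hv⟩) ∧ G.dist e v = k := by
    intro w
    constructor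
    · rintro ⟨hne', hd⟩
      match w with
      | none => exact absurd rfl hne'
      | some (i, ⟨v, hv⟩) =>
        refine ⟨i, v, hv, rfl, ?_⟩
        rw [← star_dist G e N hconn i v hv]
        exact hd
    · rintro ⟨i, v, hv, rfl, hd⟩
      exact ⟨by simp, by rw [star_dist G e N hconn i v hv]; exact hd⟩
  -- the bijection
  have hcard : Nat.card {w : StarVert V e N | H.Adj none w} = N * σ := by
    let f : Fin N × {v : V | G.dist e v = k} → {w : StarVert V e N | H.Adj none w} :=
      fun p => ⟨some (p.1, ⟨p.2.1, hne p.2.1 p.2.2⟩),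
        (hadj _).2 ⟨p.1, p.2.1, hne p.2.1 p.2.2, rfl, p.2.2⟩⟩
    have hbij : Function.Bijective f := by
      constructor
      · rintro ⟨i, v, hv⟩ ⟨j, u, hu⟩ hfe
        simp only [f, Subtype.mk.injEq, Option.some.injEq, Prod.mk.injEq] at hfe
        obtain ⟨h1, h2⟩ := hfe
        simp only [Prod.mk.injEq]
        exact ⟨h1, Subtype.ext h2⟩
      · rintro ⟨w, hw⟩
        obtain ⟨i, v, hv, rfl, hd⟩ := (hadj w).1 hw
        exact ⟨(i, ⟨v, hd⟩), rfl⟩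
    rw [← Nat.card_congr (Equiv.ofBijective f hbij), Nat.card_prod, Nat.card_eq_fintype_card,
      Fintype.card_fin, hσ]
  refine ⟨hcard, ?_⟩
  -- matrix computation
  have hsymm : ∀ y : StarVert V e N, adjMat H y none = adjMat H none y := by
    intro y
    simp only [adjMat, H.adj_comm]
  have : ((adjMat H) ^ 2) none none =
      ∑ y : StarVert V e N, adjMat H none y * adjMat H y none := by
    rw [pow_two, Matrix.mul_apply]
  rw [this]
  have hterm : ∀ y : StarVert V e N,
      adjMat H none y * adjMat H y none = if H.Adj none y then (1 : ℝ) else 0 := by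
    intro y
    rw [hsymm]
    by_cases h : H.Adj none y <;> simp [adjMat, h]
  rw [Finset.sum_congr rfl (fun y _ => hterm y), Finset.sum_boole]
  have : (Finset.univ.filter (fun y => H.Adj none y)).card
      = Nat.card {w : StarVert V e N | H.Adj none w} := by
    rw [Nat.card_eq_fintype_card]
    exact (Fintype.card_subtype _).symm
  rw [this, hcard]
  push_cast
  ring

end
end
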